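/- arXiv:1303.5999 — 3 statements merged into one kernel-verified Lean document; each statement's English description precedes it below -/
import Mathlib

section
/- Let G be a graph of order n, and let ℓ = min{ j : d(G,j) = C(n,j) } (the least cardinality such that every j-subset of vertices dominates). Then the minimum degree of G equals n − ℓ, and for every non-dominating set T of cardinality ℓ − 1 there exists a vertex v with closed neighborhood N[v] = V \ T. -/
/-- `S` dominates `G`: every vertex is in `S` or adjacent to a member of `S`. -/
def Dominates {V : Type*} (G : SimpleGraph V) (S : Set V) : Prop :=
  ∀ v : V, v ∈ S ∨ ∃ u ∈ S, G.Adj u v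

/-- number of dominating sets of cardinality `i`. -/
noncomputable def numDom {V : Type*} [Fintype V] (G : SimpleGraph V) (i : ℕ) : ℕ :=
  Nat.card {S : Finset V // S.card = i ∧ Dominates G ↑S}

/-- the domination polynomial `D(G,x) = Σ_{i=1}^{n} d(G,i) x^i`. -/
noncomputable def domPoly {V : Type*} [Fintype V] (G : SimpleGraph V) : Polynomial ℤ :=
  ∑ i ∈ Finset.Icc 1 (Fintype.card V), (numDom G i : Polynomial ℤ) * Polynomial.X ^ i

/-- the join of two vertex-disjoint graphs. -/
def GJoin {α β : Type*} (G : SimpleGraph α) (H : SimpleGraph β) : SimpleGraph (α ⊕ β) where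
  Adj x y := match x, y with
    | Sum.inl a, Sum.inl b => G.Adj a b
    | Sum.inr a, Sum.inr b => H.Adj a b
    | _, _ => True
  symm := ⟨by rintro (a|a) (b|b) h <;> simp_all [SimpleGraph.adj_comm]⟩
  loopless := ⟨by rintro (a|a) h <;> simp_all⟩

/-- `H_t(a)`: a copy of `K_a` and a copy of `K_{a+t}`, connected by a matching
from `K_a` into `K_{a+t}`. -/
def Hgraph (a t : ℕ) : SimpleGraph (Fin a ⊕ Fin (a + t)) where
  Adj x y := match x, y with
    | Sum.inl i, Sum.inl j => i ≠ j
    | Sum.inr i, Sum.inr j => i ≠ j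
    | Sum.inl i, Sum.inr j => (j : ℕ) = (i : ℕ)
    | Sum.inr i, Sum.inl j => (i : ℕ) = (j : ℕ)
  symm := ⟨by rintro (i|i) (j|j) h <;> simp_all <;> omega⟩
  loopless := ⟨by rintro (i|i) h <;> simp_all⟩


open Finset

lemma not_dominates_iff {V : Type*} (G : SimpleGraph V) (S : Finset V) :
    ¬ Dominates G ↑S ↔ ∃ v, v ∉ S ∧ ∀ u ∈ S, ¬ G.Adj u v := by
  simp [Dominates]

lemma all_card_dominates_iff {V : Type*} [Fintype V] [Nonempty V]
    (G : SimpleGraph V) [DecidableRel G.Adj] (j : ℕ) :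
    (∀ S : Finset V, S.card = j → Dominates G ↑S) ↔
      Fintype.card V - G.minDegree ≤ j := by
  classical
  constructor
  · intro h
    by_contra hj
    push_neg at hj
    obtain ⟨v, hv⟩ := G.exists_minimal_degree_vertex
    have hdlt : G.degree v < Fintype.card V := G.degree_lt_card_verts v
    set N : Finset V := insert v (G.neighborFinset v) with hN
    have hcardN : N.card = G.degree v + 1 := by
      rw [hN, card_insert_of_notMem (by simp), G.card_neighborFinset_eq_degree]
    have hcompl : j ≤ Nᶜ.card := by
      rw [card_compl, hcardN]
      omega
    obtain ⟨S, hS, hScard⟩ := Finset.exists_subset_card_eq hcompl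
    have : Dominates G ↑S := h S hScard
    rcases this v with hv' | ⟨u, hu, hadj⟩
    · have : v ∈ Nᶜ := hS hv'
      simp [hN] at this
    · have : u ∈ Nᶜ := hS hu
      simp [hN, G.adj_comm] at this
      exact this.2 hadj.symm
  · intro hj S hScard
    by_contra hdom
    obtain ⟨v, hvS, hv⟩ := (not_dominates_iff G S).mp hdom
    set N : Finset V := insert v (G.neighborFinset v) with hN
    have hdisj : Disjoint N S := by
      rw [Finset.disjoint_left]
      intro u huN huS
      rcases Finset.mem_insert.mp huN with rfl | hu
      · exact hvS huS
      · exact hv u huS ((SimpleGraph.mem_neighborFinset G v u).mp hu).symm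
    have hcardN : N.card = G.degree v + 1 := by
      rw [hN, card_insert_of_notMem (by simp), G.card_neighborFinset_eq_degree]
    have hle : N.card + S.card ≤ Fintype.card V := by
      rw [← Finset.card_union_of_disjoint hdisj]
      exact Finset.card_le_univ _
    have hmin : G.minDegree ≤ G.degree v := G.minDegree_le_degree v
    omega

lemma numDom_eq_choose_iff {V : Type*} [Fintype V]
    (G : SimpleGraph V) (j : ℕ) :
    numDom G j = (Fintype.card V).choose j ↔
      ∀ S : Finset V, S.card = j → Dominates G ↑S := by
  classical
  have h1 : numDom G j =
      (univ.filter (fun S : Finset V => S.card = j ∧ Dominates G ↑S)).card := by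
    rw [numDom, Nat.card_eq_fintype_card, Fintype.card_subtype]
  have h2 : (Fintype.card V).choose j =
      (univ.filter (fun S : Finset V => S.card = j)).card := by
    rw [← Finset.card_univ, ← Finset.card_powersetCard, Finset.powersetCard_eq_filter,
      Finset.powerset_univ]
  have hsub : (univ.filter (fun S : Finset V => S.card = j ∧ Dominates G ↑S)) ⊆
      (univ.filter (fun S : Finset V => S.card = j)) :=
    by intro S hS
       simp only [Finset.mem_filter] at hS ⊢
       exact ⟨hS.1, hS.2.1⟩
  constructor
  · intro h S hScard
    rw [h1, h2] at h
    have heq := Finset.eq_of_subset_of_card_le hsub (le_of_eq h.symm)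
    have : S ∈ (univ.filter (fun S : Finset V => S.card = j)) := by
      simp [hScard]
    rw [← heq] at this
    exact (Finset.mem_filter.mp this).2.2
  · intro h
    rw [h1, h2]
    congr 1
    apply Finset.filter_congr
    intro S _
    simp only [and_iff_left_iff_imp]
    exact h S

/-- If `ℓ = min {j : d(G,j) = C(n,j)}`, then `δ(G) = n − ℓ`, and every
non-dominating set `T` of cardinality `ℓ − 1` is the complement of a closed
neighborhood. -/
theorem minDegree_eq_of_domPoly {V : Type*} [Fintype V] [Nonempty V]
    (G : SimpleGraph V) [DecidableRel G.Adj] (ℓ : ℕ)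
    (hℓ : IsLeast {j : ℕ | numDom G j = (Fintype.card V).choose j} ℓ) :
    G.minDegree = Fintype.card V - ℓ ∧
      ∀ T : Finset V, T.card = ℓ - 1 → ¬ Dominates G ↑T →
        ∃ v : V, insert v (G.neighborSet v) = Set.univ \ ↑T := by
  classical
  set n := Fintype.card V with hn
  set δ := G.minDegree with hδ
  have hδlt : δ < n := by
    obtain ⟨v, hv⟩ := G.exists_minimal_degree_vertex
    have h2 := G.degree_lt_card_verts v
    omega
  have hset : ∀ j, numDom G j = n.choose j ↔ n - δ ≤ j := by
    intro j
    rw [numDom_eq_choose_iff, all_card_dominates_iff]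
  have hℓeq : ℓ = n - δ := by
    have h1 : n - δ ≤ ℓ := (hset ℓ).mp hℓ.1
    have h2 : ℓ ≤ n - δ := hℓ.2 ((hset (n - δ)).mpr le_rfl)
    omega
  refine ⟨by omega, ?_⟩
  intro T hT hdom
  obtain ⟨v, hvT, hv⟩ := (not_dominates_iff G T).mp hdom
  set N : Finset V := insert v (G.neighborFinset v) with hN
  have hcardN : N.card = G.degree v + 1 := by
    rw [hN, Finset.card_insert_of_notMem (by simp), G.card_neighborFinset_eq_degree]
  have hsub : N ⊆ Tᶜ := by
    intro u hu
    rw [Finset.mem_compl]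
    rcases Finset.mem_insert.mp hu with rfl | hu'
    · exact hvT
    · intro huT
      exact hv u huT ((SimpleGraph.mem_neighborFinset G v u).mp hu').symm
  have hTc : Tᶜ.card = n - T.card := by rw [Finset.card_compl]
  have hmin : δ ≤ G.degree v := G.minDegree_le_degree v
  have heq : N = Tᶜ := Finset.eq_of_subset_of_card_le hsub (by omega)
  refine ⟨v, ?_⟩
  have hc := congrArg (fun s : Finset V => (↑s : Set V)) heq
  simpa [hN, Set.compl_eq_univ_diff, SimpleGraph.neighborFinset_def] using hc
end

section
/- Let k ∈ ℕ and let F be a family of k-element subsets of a finite set V with |F| = C(x,k) for some real x ≥ k. Then the shadow ∂F (the family of (k−1)-subsets contained in some member of F) satisfies |∂F| ≥ C(x, k−1); moreover, if equality holds then x is an integer and F consists of all k-subsets of some x-element subset X of V. -/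
/-- Generalized binomial coefficient `C(x,k) = x(x−1)⋯(x−k+1)/k!` for real `x`. -/
noncomputable def realChoose (x : ℝ) (k : ℕ) : ℝ :=
  (∏ i ∈ Finset.range k, (x - i)) / (Nat.factorial k)

namespace LKK
open Finset FinsetFamily

open Finset FinsetFamily

open Finset

lemma prod_cast_descFactorial (n k : ℕ) :
    ∏ i ∈ Finset.range k, ((n : ℝ) - i) = (n.descFactorial k : ℝ) := by
  rcases lt_or_ge n k with h | h
  · rw [Finset.prod_eq_zero (Finset.mem_range.2 h) (by simp),
      Nat.descFactorial_eq_zero_iff_lt.2 h, Nat.cast_zero]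
  · rw [Nat.descFactorial_eq_prod_range, Nat.cast_prod]
    refine Finset.prod_congr rfl fun i hi => ?_
    rw [Nat.cast_sub ((Finset.mem_range.1 hi).le.trans h)]

lemma rc_cast (n k : ℕ) : realChoose (n : ℝ) k = (n.choose k : ℝ) := by
  rw [realChoose, prod_cast_descFactorial, Nat.descFactorial_eq_factorial_mul_choose]
  have h3 : (Nat.factorial k : ℝ) ≠ 0 := Nat.cast_ne_zero.2 (Nat.factorial_ne_zero k)
  push_cast
  field_simp

lemma rc_zero (x : ℝ) : realChoose x 0 = 1 := by simp [realChoose]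

lemma rc_one (x : ℝ) : realChoose x 1 = x := by simp [realChoose]

lemma rc_pascal (y : ℝ) (k : ℕ) :
    realChoose (y + 1) (k + 1) = realChoose y (k + 1) + realChoose y k := by
  have h1 : ∏ i ∈ Finset.range (k + 1), (y + 1 - i) = (y + 1) * ∏ i ∈ Finset.range k, (y - i) := by
    rw [Finset.prod_range_succ', Nat.cast_zero, sub_zero, mul_comm]
    congr 1
    refine Finset.prod_congr rfl fun i _ => ?_
    push_cast; ring
  have h2 : ∏ i ∈ Finset.range (k + 1), (y - i) =
      (∏ i ∈ Finset.range k, (y - i)) * (y - k) := Finset.prod_range_succ _ _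
  rw [realChoose, realChoose, realChoose, h1, h2]
  have hf : (Nat.factorial (k + 1) : ℝ) = (k + 1) * Nat.factorial k := by
    rw [Nat.factorial_succ]; push_cast; ring
  have h3 : (Nat.factorial k : ℝ) ≠ 0 := Nat.cast_ne_zero.2 (Nat.factorial_ne_zero k)
  have h4 : ((k : ℝ) + 1) ≠ 0 := by positivity
  rw [hf]
  field_simp
  ring

lemma rc_nonneg {x : ℝ} {k : ℕ} (h : (k : ℝ) - 1 ≤ x) : 0 ≤ realChoose x k := by
  apply div_nonneg _ (Nat.cast_nonneg _)
  apply Finset.prod_nonneg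
  intro i hi
  have hik : (i : ℝ) + 1 ≤ k := by exact_mod_cast Finset.mem_range.1 hi
  linarith

lemma rc_one_le {x : ℝ} {k : ℕ} (h : (k : ℝ) ≤ x) : 1 ≤ realChoose x k := by
  have hfac : (0 : ℝ) < (Nat.factorial k : ℝ) := by positivity
  rw [realChoose, le_div_iff₀ hfac, one_mul]
  calc (Nat.factorial k : ℝ) = ∏ i ∈ Finset.range k, ((k : ℝ) - i) := by
        rw [prod_cast_descFactorial, Nat.descFactorial_self]
    _ ≤ ∏ i ∈ Finset.range k, (x - i) := by
        apply Finset.prod_le_prod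
        · intro i hi
          have hik : (i : ℝ) + 1 ≤ k := by exact_mod_cast Finset.mem_range.1 hi
          linarith
        · intro i hi; linarith

lemma rc_strictMonoOn {k : ℕ} (hk : 1 ≤ k) :
    StrictMonoOn (fun x => realChoose x k) (Set.Ici ((k : ℝ) - 1)) := by
  obtain ⟨K, rfl⟩ : ∃ K, k = K + 1 := ⟨k - 1, by omega⟩
  intro a ha b hb hab
  simp only [Set.mem_Ici] at ha hb
  have haK : (K : ℝ) ≤ a := by push_cast at ha; linarith
  have hbK : (K : ℝ) ≤ b := by push_cast at hb; linarith
  have hfac : (0 : ℝ) < ((Nat.factorial (K + 1) : ℕ) : ℝ) := by positivity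
  simp only [realChoose, div_eq_mul_inv]
  apply mul_lt_mul_of_pos_right _ (by positivity)
  rw [Finset.prod_range_succ, Finset.prod_range_succ]
  have hstep1 : ∀ i ∈ Finset.range K, (0:ℝ) ≤ a - i ∧ a - i ≤ b - i := by
    intro i hi
    have hik : (i : ℝ) + 1 ≤ K := by exact_mod_cast Finset.mem_range.1 hi
    constructor <;> linarith
  calc (∏ i ∈ Finset.range K, (a - i)) * (a - K)
      ≤ (∏ i ∈ Finset.range K, (b - i)) * (a - K) := by
        apply mul_le_mul_of_nonneg_right _ (by linarith)
        apply Finset.prod_le_prod (fun i hi => (hstep1 i hi).1) (fun i hi => (hstep1 i hi).2)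
    _ < (∏ i ∈ Finset.range K, (b - i)) * (b - K) := by
        apply mul_lt_mul_of_pos_left (by linarith)
        apply Finset.prod_pos
        intro i hi
        have hik : (i : ℝ) + 1 ≤ K := by exact_mod_cast Finset.mem_range.1 hi
        linarith

lemma rc_monoOn {k : ℕ} (hk : 1 ≤ k) :
    MonotoneOn (fun x => realChoose x k) (Set.Ici ((k : ℝ) - 1)) :=
  (rc_strictMonoOn hk).monotoneOn

lemma rc_exists {k : ℕ} (hk : 1 ≤ k) {c : ℝ} (hc : 1 ≤ c) :
    ∃ z : ℝ, (k : ℝ) ≤ z ∧ realChoose z k = c := by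
  set z0 : ℝ := (k : ℝ) + c * Nat.factorial k with hz0
  have hfac : (0 : ℝ) < (Nat.factorial k : ℝ) := by positivity
  have hcont : ContinuousOn (fun x => realChoose x k) (Set.Icc (k : ℝ) z0) := by
    apply Continuous.continuousOn
    unfold realChoose
    exact (continuous_finset_prod _ fun i _ => by continuity).div_const _
  have h1 : realChoose (k : ℝ) k = 1 := by rw [rc_cast]; simp
  have h2 : c ≤ realChoose z0 k := by
    rw [realChoose, le_div_iff₀ hfac]
    calc c * (Nat.factorial k : ℝ) ≤ c * Nat.factorial k + 1 := by linarith
      _ = ∏ i ∈ Finset.range k, (if i = 0 then c * Nat.factorial k + 1 else 1) := by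
          rw [Finset.prod_ite_eq' (Finset.range k) 0 (fun _ => c * Nat.factorial k + 1)]
          rw [if_pos (Finset.mem_range.2 (by omega))]
      _ ≤ ∏ i ∈ Finset.range k, (z0 - i) := by
          apply Finset.prod_le_prod
          · intro i _; split <;> [nlinarith; norm_num]
          · intro i hi
            have hik : (i : ℝ) + 1 ≤ k := by exact_mod_cast Finset.mem_range.1 hi
            split <;> nlinarith
  have hle : (k : ℝ) ≤ z0 := by nlinarith
  have := intermediate_value_Icc hle hcont
  have hmem : c ∈ Set.Icc (realChoose (k : ℝ) k) (realChoose z0 k) := by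
    rw [h1]; exact ⟨hc, h2⟩
  obtain ⟨z, hz, hz2⟩ := this hmem
  exact ⟨z, hz.1, hz2⟩


open Finset FinsetFamily

/-- the link of `0`. -/
def link (F : Finset (Finset ℕ)) : Finset (Finset ℕ) :=
  (F.filter (fun A => 0 ∈ A)).image (fun A => A.erase 0)

/-- members not containing `0`. -/
def rest (F : Finset (Finset ℕ)) : Finset (Finset ℕ) := F.filter (fun A => 0 ∉ A)

lemma mem_link {F : Finset (Finset ℕ)} {B : Finset ℕ} :
    B ∈ link F ↔ 0 ∉ B ∧ insert 0 B ∈ F := by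
  constructor
  · intro h
    obtain ⟨A, hA, rfl⟩ := Finset.mem_image.1 h
    rw [Finset.mem_filter] at hA
    exact ⟨Finset.notMem_erase _ _, by rw [Finset.insert_erase hA.2]; exact hA.1⟩
  · rintro ⟨h0, hins⟩
    exact Finset.mem_image.2 ⟨insert 0 B, Finset.mem_filter.2 ⟨hins, Finset.mem_insert_self _ _⟩,
      by rw [Finset.erase_insert h0]⟩

lemma link_zero_not_mem {F : Finset (Finset ℕ)} {B : Finset ℕ} (h : B ∈ link F) : 0 ∉ B :=
  (mem_link.1 h).1

lemma card_link_add_card_rest (F : Finset (Finset ℕ)) :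
    (link F).card + (rest F).card = F.card := by
  rw [link, rest, Finset.card_image_of_injOn, Finset.card_filter_add_card_filter_not]
  intro A hA B hB hAB
  rw [Finset.coe_filter, Set.mem_setOf_eq] at hA hB
  have hAB' : A.erase 0 = B.erase 0 := hAB
  rw [← Finset.insert_erase hA.2, hAB', Finset.insert_erase hB.2]

lemma link_sized {F : Finset (Finset ℕ)} {k : ℕ} (hF : ∀ A ∈ F, A.card = k) :
    ∀ B ∈ link F, B.card = k - 1 := by
  intro B hB
  obtain ⟨h0, hins⟩ := mem_link.1 hB
  have := hF _ hins
  rw [Finset.card_insert_of_notMem h0] at this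
  omega

lemma shadow_sized {F : Finset (Finset ℕ)} {k : ℕ} (hF : ∀ A ∈ F, A.card = k) :
    ∀ B ∈ Finset.shadow F, B.card = k - 1 := by
  intro B hB
  obtain ⟨s, hs, a, ha, rfl⟩ := Finset.mem_shadow_iff.1 hB
  rw [Finset.card_erase_of_mem ha, hF _ hs]

/-- the key consequence of being `({0},{a})`-compressed for all `a`. -/
lemma compressed_insert {F : Finset (Finset ℕ)}
    (HC : ∀ j : ℕ, j ≠ 0 → UV.IsCompressed {0} {j} F)
    {A : Finset ℕ} (hA : A ∈ F) {a : ℕ} (ha : a ∈ A) (h0 : 0 ∉ A) :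
    insert 0 (A.erase a) ∈ F := by
  have ha0 : a ≠ 0 := fun h => h0 (h ▸ ha)
  have hcomp : UV.compress {0} {a} A = insert 0 (A.erase a) := by
    rw [UV.compress_of_disjoint_of_le (by simpa using h0) (by simpa using ha)]
    ext z
    simp only [Finset.sup_eq_union, Finset.mem_sdiff, Finset.mem_union, Finset.mem_singleton,
      Finset.mem_insert, Finset.mem_erase]
    constructor
    · rintro ⟨hz1 | hz2, hz3⟩
      · exact Or.inr ⟨hz3, hz1⟩
      · exact Or.inl hz2
    · rintro (rfl | ⟨hz1, hz2⟩)
      · exact ⟨Or.inr rfl, Ne.symm ha0⟩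
      · exact ⟨Or.inl hz2, hz1⟩
  have := UV.compress_mem_compression (u := ({0} : Finset ℕ)) (v := {a}) hA
  rwa [(HC a ha0), hcomp] at this

lemma zero_not_mem_shadow_link {F : Finset (Finset ℕ)} {s : Finset ℕ}
    (hs : s ∈ Finset.shadow (link F)) : 0 ∉ s := by
  obtain ⟨C, hC, hsub⟩ := Finset.exists_subset_of_mem_shadow hs
  exact fun h => link_zero_not_mem hC (hsub h)

lemma shadow_filter_not_mem {F : Finset (Finset ℕ)}
    (HC : ∀ j : ℕ, j ≠ 0 → UV.IsCompressed {0} {j} F) :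
    (Finset.shadow F).filter (fun B => 0 ∉ B) = link F := by
  ext B
  rw [Finset.mem_filter, Finset.mem_shadow_iff_insert_mem]
  constructor
  · rintro ⟨⟨a, haB, hins⟩, h0B⟩
    by_cases ha0 : a = 0
    · subst ha0; exact mem_link.2 ⟨h0B, hins⟩
    · have h0A : 0 ∉ insert a B := by
        simp only [Finset.mem_insert]
        rintro (h | h)
        exacts [ha0 h.symm, h0B h]
      have := compressed_insert HC hins (Finset.mem_insert_self a B) h0A
      rw [Finset.erase_insert haB] at this
      exact mem_link.2 ⟨h0B, this⟩
  · intro hB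
    obtain ⟨h0B, hins⟩ := mem_link.1 hB
    exact ⟨⟨0, h0B, hins⟩, h0B⟩

lemma shadow_filter_mem {F : Finset (Finset ℕ)} :
    (Finset.shadow F).filter (fun B => 0 ∈ B) =
      (Finset.shadow (link F)).image (insert 0) := by
  ext B
  rw [Finset.mem_filter, Finset.mem_shadow_iff_insert_mem]
  constructor
  · rintro ⟨⟨a, haB, hins⟩, h0B⟩
    have ha0 : a ≠ 0 := fun h => haB (h ▸ h0B)
    refine Finset.mem_image.2 ⟨B.erase 0, ?_, Finset.insert_erase h0B⟩
    rw [Finset.mem_shadow_iff_insert_mem]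
    refine ⟨a, fun h => haB (Finset.mem_of_mem_erase h), ?_⟩
    rw [mem_link]
    constructor
    · simp only [Finset.mem_insert]
      rintro (h | h)
      exacts [ha0 h.symm, Finset.notMem_erase _ _ h]
    · rw [Finset.insert_comm, Finset.insert_erase h0B]; exact hins
  · intro hB
    obtain ⟨s, hs, rfl⟩ := Finset.mem_image.1 hB
    obtain ⟨a, has, hins⟩ := Finset.mem_shadow_iff_insert_mem.1 hs
    obtain ⟨h0as, hinsF⟩ := mem_link.1 hins
    have ha0 : a ≠ 0 := fun h => h0as (h ▸ Finset.mem_insert_self a s)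
    have h0s : 0 ∉ s := fun h => h0as (Finset.mem_insert_of_mem h)
    refine ⟨⟨a, ?_, ?_⟩, Finset.mem_insert_self _ _⟩
    · simp only [Finset.mem_insert]
      rintro (h | h)
      exacts [ha0 h, has h]
    · rw [Finset.insert_comm]; exact hinsF

lemma card_shadow_eq {F : Finset (Finset ℕ)}
    (HC : ∀ j : ℕ, j ≠ 0 → UV.IsCompressed {0} {j} F) :
    (Finset.shadow F).card = (link F).card + (Finset.shadow (link F)).card := by
  have hsplit := Finset.card_filter_add_card_filter_not
    (s := Finset.shadow F) (p := fun B => 0 ∈ B)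
  have e1 : Finset.filter (fun a => ¬(fun B : Finset ℕ => 0 ∈ B) a) (Finset.shadow F)
      = link F := shadow_filter_not_mem HC
  have e2 : Finset.filter (fun B => 0 ∈ B) (Finset.shadow F)
      = (Finset.shadow (link F)).image (insert 0) := shadow_filter_mem
  rw [e1, e2] at hsplit
  have e3 : ((Finset.shadow (link F)).image (insert 0)).card
      = (Finset.shadow (link F)).card := by
    apply Finset.card_image_of_injOn
    intro s hs t ht hst
    have h0s : 0 ∉ s := zero_not_mem_shadow_link hs
    have h0t : 0 ∉ t := zero_not_mem_shadow_link ht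
    rw [← Finset.erase_insert h0s, hst, Finset.erase_insert h0t]
  omega

lemma shadow_rest_subset_link {F : Finset (Finset ℕ)}
    (HC : ∀ j : ℕ, j ≠ 0 → UV.IsCompressed {0} {j} F) :
    Finset.shadow (rest F) ⊆ link F := by
  intro B hB
  obtain ⟨a, haB, hins⟩ := Finset.mem_shadow_iff_insert_mem.1 hB
  rw [rest, Finset.mem_filter] at hins
  obtain ⟨hinsF, h0⟩ := hins
  have h0B : 0 ∉ B := fun h => h0 (Finset.mem_insert_of_mem h)
  have := compressed_insert HC hinsF (Finset.mem_insert_self a B) h0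
  rw [Finset.erase_insert haB] at this
  exact mem_link.2 ⟨h0B, this⟩

lemma link_nonempty {F : Finset (Finset ℕ)} {k : ℕ} (hk : 1 ≤ k)
    (hF : ∀ A ∈ F, A.card = k) (hne : F.Nonempty)
    (HC : ∀ j : ℕ, j ≠ 0 → UV.IsCompressed {0} {j} F) :
    (link F).Nonempty := by
  obtain ⟨A, hA⟩ := hne
  by_cases h0 : 0 ∈ A
  · exact ⟨A.erase 0, mem_link.2 ⟨Finset.notMem_erase _ _, by rwa [Finset.insert_erase h0]⟩⟩
  · have hAne : A.Nonempty := by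
      rw [← Finset.card_pos, hF _ hA]; omega
    obtain ⟨a, ha⟩ := hAne
    have := compressed_insert HC hA ha h0
    exact ⟨A.erase a, mem_link.2 ⟨fun h => h0 (Finset.mem_of_mem_erase h), this⟩⟩

lemma shadow_powersetCard {X : Finset ℕ} {k : ℕ} (hk : 1 ≤ k) (hkX : k ≤ X.card) :
    Finset.shadow (Finset.powersetCard k X) = Finset.powersetCard (k - 1) X := by
  ext B
  rw [Finset.mem_shadow_iff_insert_mem, Finset.mem_powersetCard]
  constructor
  · rintro ⟨a, haB, hins⟩
    rw [Finset.mem_powersetCard] at hins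
    obtain ⟨hsub, hcard⟩ := hins
    rw [Finset.card_insert_of_notMem haB] at hcard
    exact ⟨fun z hz => hsub (Finset.mem_insert_of_mem hz), by omega⟩
  · rintro ⟨hBX, hBcard⟩
    have hne : (X \ B).Nonempty := by
      rw [← Finset.card_pos, Finset.card_sdiff_of_subset hBX]; omega
    obtain ⟨a, ha⟩ := hne
    obtain ⟨haX, haB⟩ := Finset.mem_sdiff.1 ha
    refine ⟨a, haB, Finset.mem_powersetCard.2 ⟨?_, ?_⟩⟩
    · intro z hz
      rcases Finset.mem_insert.1 hz with rfl | hz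
      · exact haX
      · exact hBX hz
    · rw [Finset.card_insert_of_notMem haB]; omega

lemma exchange_closed {Y : Finset ℕ} {r : ℕ} (D : Finset (Finset ℕ))
    (hD : D ⊆ Finset.powersetCard r Y) (hne : D.Nonempty)
    (hclosed : ∀ T ∈ Finset.shadow D, ∀ w ∈ Y, w ∉ T → insert w T ∈ D) :
    D = Finset.powersetCard r Y := by
  have key : ∀ d : ℕ, ∀ C B : Finset ℕ, B ∈ D → C ⊆ Y → C.card = r → (C \ B).card = d →
      C ∈ D := by
    intro d
    induction d with
    | zero =>
      intro C B hB hCY hCr hd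
      have hBr : B.card = r := (Finset.mem_powersetCard.1 (hD hB)).2
      have hsub : C ⊆ B := by
        rw [← Finset.sdiff_eq_empty_iff_subset]; exact Finset.card_eq_zero.1 hd
      rwa [Finset.eq_of_subset_of_card_le hsub (by omega)]
    | succ d ih =>
      intro C B hB hCY hCr hd
      have hBr : B.card = r := (Finset.mem_powersetCard.1 (hD hB)).2
      have hCBne : (C \ B).Nonempty := by rw [← Finset.card_pos, hd]; omega
      obtain ⟨w, hw⟩ := hCBne
      obtain ⟨hwC, hwB⟩ := Finset.mem_sdiff.1 hw
      have hBCne : (B \ C).Nonempty := by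
        rw [← Finset.card_pos]
        have e1 := Finset.card_sdiff_add_card_inter B C
        have e2 := Finset.card_sdiff_add_card_inter C B
        rw [Finset.inter_comm] at e2
        omega
      obtain ⟨b, hb⟩ := hBCne
      obtain ⟨hbB, hbC⟩ := Finset.mem_sdiff.1 hb
      have hT : B.erase b ∈ Finset.shadow D := Finset.erase_mem_shadow hB hbB
      have hwT : w ∉ B.erase b := fun h => hwB (Finset.mem_of_mem_erase h)
      have hB' : insert w (B.erase b) ∈ D := hclosed _ hT w (hCY hwC) hwT
      apply ih C _ hB' hCY hCr
      have hident : C \ insert w (B.erase b) = (C \ B).erase w := by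
        ext z
        simp only [Finset.mem_sdiff, Finset.mem_insert, Finset.mem_erase]
        constructor
        · rintro ⟨hzC, hz⟩
          have hzw : z ≠ w := fun h => hz (Or.inl h)
          have hzB : z ∉ B := by
            intro hB2
            by_cases hzb : z = b
            · exact hbC (hzb ▸ hzC)
            · exact hz (Or.inr ⟨hzb, hB2⟩)
          exact ⟨hzw, hzC, hzB⟩
        · rintro ⟨hzw, hzC, hzB⟩
          refine ⟨hzC, ?_⟩
          rintro (rfl | ⟨_, h⟩)
          · exact hzw rfl
          · exact hzB h
      rw [hident, Finset.card_erase_of_mem hw, hd]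
      omega
  obtain ⟨B0, hB0⟩ := hne
  apply Finset.Subset.antisymm hD
  intro C hC
  obtain ⟨hCY, hCr⟩ := Finset.mem_powersetCard.1 hC
  exact key (C \ B0).card C B0 hB0 hCY hCr rfl


open Finset FinsetFamily


lemma compression_transfer {k n j : ℕ} (hk : 1 ≤ k) (hj : j ≠ 0)
    {F : Finset (Finset ℕ)} (hF : ∀ A ∈ F, A.card = k)
    {X : Finset ℕ} (hC : UV.compression {0} {j} F = Finset.powersetCard k X)
    (hX : X.card = n)
    (hsh : (Finset.shadow F).card ≤ n.choose (k - 1))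
    (hexch : ∀ (Y : Finset ℕ) (r : ℕ) (D : Finset (Finset ℕ)),
      D ⊆ Finset.powersetCard r Y → D.Nonempty →
      (∀ T ∈ Finset.shadow D, ∀ w ∈ Y, w ∉ T → insert w T ∈ D) →
      D = Finset.powersetCard r Y) :
    ∃ X' : Finset ℕ, X'.card = n ∧ F = Finset.powersetCard k X' := by
  classical
  by_cases hFC : F = Finset.powersetCard k X
  · exact ⟨X, hX, hFC⟩
  set C := UV.compression {0} {j} F with hCdef
  have hcompress : ∀ A : Finset ℕ, 0 ∉ A → j ∈ A →
      UV.compress {0} {j} A = insert 0 (A.erase j) := by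
    intro A h0 hjA
    rw [UV.compress_of_disjoint_of_le (by simpa using h0) (by simpa using hjA)]
    ext z
    simp only [Finset.sup_eq_union, Finset.mem_sdiff, Finset.mem_union, Finset.mem_singleton,
      Finset.mem_insert, Finset.mem_erase]
    constructor
    · rintro ⟨hz1 | hz2, hz3⟩
      · exact Or.inr ⟨hz3, hz1⟩
      · exact Or.inl hz2
    · rintro (rfl | ⟨hz1, hz2⟩)
      · exact ⟨Or.inr rfl, Ne.symm hj⟩
      · exact ⟨Or.inl hz2, hz1⟩
  have hcond : ∀ A : Finset ℕ, UV.compress {0} {j} A ≠ A → 0 ∉ A ∧ j ∈ A := by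
    intro A h
    by_cases hc : Disjoint ({0} : Finset ℕ) A ∧ ({j} : Finset ℕ) ≤ A
    · exact ⟨by simpa using hc.1, by simpa using hc.2⟩
    · rw [UV.compress, if_neg hc] at h; exact absurd rfl h
  set M : Finset (Finset ℕ) := F.filter (fun A => A ∉ C) with hMdef
  set M' : Finset (Finset ℕ) := C.filter (fun B => B ∉ F) with hM'def
  have hcardFC : C.card = F.card := UV.card_compression _ _ _
  -- structure of moved sets
  have factA : ∀ A ∈ M, 0 ∉ A ∧ j ∈ A ∧ insert 0 (A.erase j) ∈ M' := by
    intro A hA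
    obtain ⟨hAF, hAnC⟩ := Finset.mem_filter.1 hA
    have hcpA : UV.compress {0} {j} A ∉ F := by
      intro hin
      exact hAnC (UV.mem_compression.2 (Or.inl ⟨hAF, hin⟩))
    have hne : UV.compress {0} {j} A ≠ A := fun h => hcpA (by rw [h]; exact hAF)
    obtain ⟨h0A, hjA⟩ := hcond A hne
    have himg : UV.compress {0} {j} A = insert 0 (A.erase j) := hcompress A h0A hjA
    have hinC : insert 0 (A.erase j) ∈ C := by
      rw [← himg]; exact UV.compress_mem_compression hAF
    have hinM' : insert 0 (A.erase j) ∈ M' :=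
      Finset.mem_filter.2 ⟨hinC, by rwa [← himg]⟩
    exact ⟨h0A, hjA, hinM'⟩
  have factB : ∀ B ∈ M', 0 ∈ B ∧ j ∉ B ∧ insert j (B.erase 0) ∈ M := by
    intro B hB
    obtain ⟨hBC, hBnF⟩ := Finset.mem_filter.1 hB
    rcases UV.mem_compression.1 hBC with ⟨hBF, _⟩ | ⟨_, A, hAF, hcA⟩
    · exact absurd hBF hBnF
    have hne : UV.compress {0} {j} A ≠ A := fun h => hBnF (by rw [← hcA, h]; exact hAF)
    obtain ⟨h0A, hjA⟩ := hcond A hne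
    have himg : B = insert 0 (A.erase j) := by rw [← hcA, hcompress A h0A hjA]
    have h0B : 0 ∈ B := by rw [himg]; exact Finset.mem_insert_self _ _
    have hjB : j ∉ B := by
      rw [himg]
      simp only [Finset.mem_insert, Finset.mem_erase]
      rintro (h | ⟨h, _⟩)
      · exact hj h
      · exact h rfl
    have hBe : B.erase 0 = A.erase j := by
      rw [himg, Finset.erase_insert (fun h => h0A (Finset.mem_of_mem_erase h))]
    have hAid : insert j (B.erase 0) = A := by rw [hBe, Finset.insert_erase hjA]
    have hAnC : A ∉ C := by
      intro hAC
      rcases UV.mem_compression.1 hAC with ⟨_, hcin⟩ | ⟨hAnF, _⟩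
      · rw [hcompress A h0A hjA, ← himg] at hcin; exact hBnF hcin
      · exact hAnF hAF
    rw [hAid]
    exact ⟨h0B, hjB, Finset.mem_filter.2 ⟨hAF, hAnC⟩⟩
  -- M is nonempty
  have hMne : M.Nonempty := by
    rcases Finset.eq_empty_or_nonempty M with hM | hM
    · exfalso
      apply hFC
      have hsub : F ⊆ C := by
        intro A hA
        by_contra hAC
        exact Finset.notMem_empty A (hM ▸ Finset.mem_filter.2 ⟨hA, hAC⟩)
      exact (Finset.eq_of_subset_of_card_le hsub hcardFC.le).trans hC
    · exact hM
  obtain ⟨A0, hA0⟩ := hMne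
  obtain ⟨h0A0, hjA0, hB0⟩ := factA A0 hA0
  have hA0F : A0 ∈ F := (Finset.mem_filter.1 hA0).1
  have hB0C : insert 0 (A0.erase j) ∈ C := (Finset.mem_filter.1 hB0).1
  have hB0X : insert 0 (A0.erase j) ⊆ X := by
    rw [hC] at hB0C; exact (Finset.mem_powersetCard.1 hB0C).1
  have hjX : j ∉ X := by
    intro hjX
    have hA0nC : A0 ∉ C := (Finset.mem_filter.1 hA0).2
    apply hA0nC
    rw [hC]
    refine Finset.mem_powersetCard.2 ⟨?_, hF _ hA0F⟩
    intro z hz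
    by_cases hzj : z = j
    · exact hzj ▸ hjX
    · exact hB0X (Finset.mem_insert_of_mem (Finset.mem_erase.2 ⟨hzj, hz⟩))
  have h0X : 0 ∈ X := hB0X (Finset.mem_insert_self _ _)
  have hkn : k ≤ n := by
    have := Finset.card_le_card hB0X
    rw [hX] at this
    have hcB0 : (insert 0 (A0.erase j)).card = k := by
      rw [hC] at hB0C; exact (Finset.mem_powersetCard.1 hB0C).2
    omega
  have hjmem : ∀ A ∈ F, j ∈ A → A ∈ M := by
    intro A hA hjA
    refine Finset.mem_filter.2 ⟨hA, ?_⟩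
    intro hAC
    rw [hC] at hAC
    exact hjX ((Finset.mem_powersetCard.1 hAC).1 hjA)
  have hCMsubF : ∀ B ∈ C, B ∉ M' → B ∈ F := by
    intro B hBC hBM'
    by_contra hBF
    exact hBM' (Finset.mem_filter.2 ⟨hBC, hBF⟩)
  -- case n = k
  by_cases hnk : n = k
  · have hXX : X.card = k := by omega
    have hCX : C = {X} := by rw [hC, ← hXX, Finset.powersetCard_self]
    have hFcard1 : F.card = 1 := by rw [← hcardFC, hCX, Finset.card_singleton]
    obtain ⟨a, ha⟩ := Finset.card_eq_one.1 hFcard1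
    have hA0a : A0 = a := by rw [ha] at hA0F; exact Finset.mem_singleton.1 hA0F
    refine ⟨A0, ?_, ?_⟩
    · rw [hF _ hA0F]; omega
    · rw [← (hF _ hA0F), Finset.powersetCard_self, ha, hA0a]
  have hkltn : k < n := lt_of_le_of_ne hkn (fun h => hnk h.symm)
  -- main case
  set Y : Finset ℕ := X.erase 0 with hYdef
  have hYcard : Y.card = n - 1 := by rw [hYdef, Finset.card_erase_of_mem h0X, hX]
  have hjY : j ∉ Y := fun h => hjX (Finset.mem_of_mem_erase h)
  have h0Y : 0 ∉ Y := Finset.notMem_erase _ _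
  set D' : Finset (Finset ℕ) := M'.image (fun B => B.erase 0) with hD'def
  have hmemD' : ∀ T : Finset ℕ, T ∈ D' ↔ (0 ∉ T ∧ insert 0 T ∈ M') := by
    intro T
    constructor
    · intro h
      obtain ⟨B, hBM', rfl⟩ := Finset.mem_image.1 h
      obtain ⟨h0B, _, _⟩ := factB B hBM'
      exact ⟨Finset.notMem_erase _ _, by rwa [Finset.insert_erase h0B]⟩
    · rintro ⟨h0T, hins⟩
      exact Finset.mem_image.2 ⟨insert 0 T, hins, Finset.erase_insert h0T⟩
  have hM'X : ∀ B ∈ M', B ⊆ X ∧ B.card = k := by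
    intro B hB
    have := (Finset.mem_filter.1 hB).1
    rw [hC] at this
    exact Finset.mem_powersetCard.1 this
  have hD'sub : D' ⊆ Finset.powersetCard (k - 1) Y := by
    intro T hT
    obtain ⟨B, hBM', rfl⟩ := Finset.mem_image.1 hT
    obtain ⟨h0B, _, _⟩ := factB B hBM'
    obtain ⟨hBX, hBk⟩ := hM'X B hBM'
    refine Finset.mem_powersetCard.2 ⟨?_, ?_⟩
    · exact Finset.erase_subset_erase 0 hBX
    · rw [Finset.card_erase_of_mem h0B, hBk]
  have hD'Y : ∀ T ∈ D', T ⊆ Y := fun T hT => (Finset.mem_powersetCard.1 (hD'sub hT)).1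
  have hD'ne : D'.Nonempty := ⟨(insert 0 (A0.erase j)).erase 0, Finset.mem_image.2 ⟨_, hB0, rfl⟩⟩
  -- members of M are insert j of members of D'
  have hMD' : ∀ A ∈ M, j ∈ A ∧ A.erase j ∈ D' ∧ A = insert j (A.erase j) := by
    intro A hA
    obtain ⟨h0A, hjA, hins⟩ := factA A hA
    have h0Aej : 0 ∉ A.erase j := fun h => h0A (Finset.mem_of_mem_erase h)
    refine ⟨hjA, ?_, (Finset.insert_erase hjA).symm⟩
    rw [hmemD' _]
    exact ⟨h0Aej, hins⟩
  -- shadow members of D' avoid j and 0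
  have hshD'j : ∀ s ∈ Finset.shadow D', j ∉ s := by
    intro s hs
    obtain ⟨T, hT, hsub⟩ := Finset.exists_subset_of_mem_shadow hs
    exact fun h => hjY (hD'Y T hT (hsub h))
  -- S2 : shadow elements containing j
  have hS2 : (Finset.shadow F).filter (fun t => j ∈ t) =
      (Finset.shadow D').image (insert j) := by
    ext t
    rw [Finset.mem_filter, Finset.mem_shadow_iff_insert_mem]
    constructor
    · rintro ⟨⟨a, hat, hins⟩, hjt⟩
      have haj : a ≠ j := fun h => hat (h ▸ hjt)
      have hAM : insert a t ∈ M := hjmem _ hins (Finset.mem_insert_of_mem hjt)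
      obtain ⟨hjA, hAD', _⟩ := hMD' _ hAM
      refine Finset.mem_image.2 ⟨t.erase j, ?_, Finset.insert_erase hjt⟩
      rw [Finset.mem_shadow_iff_insert_mem]
      refine ⟨a, fun h => hat (Finset.mem_of_mem_erase h), ?_⟩
      have : insert a (t.erase j) = (insert a t).erase j := (Finset.erase_insert_of_ne haj).symm
      rw [this]
      exact hAD'
    · intro ht
      obtain ⟨s, hs, rfl⟩ := Finset.mem_image.1 ht
      obtain ⟨a, has, hins⟩ := Finset.mem_shadow_iff_insert_mem.1 hs
      have hTD' := hins
      rw [hmemD' _] at hTD'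
      obtain ⟨h0T, hinsM'⟩ := hTD'
      obtain ⟨_, _, hAM⟩ := factB _ hinsM'
      have hBe : (insert 0 (insert a s)).erase 0 = insert a s := by
        rw [Finset.erase_insert h0T]
      rw [hBe] at hAM
      have hAF : insert j (insert a s) ∈ F := (Finset.mem_filter.1 hAM).1
      have haj : a ≠ j := by
        intro h
        subst h
        exact hjY (hD'Y _ hins (Finset.mem_insert_self a s))
      refine ⟨⟨a, ?_, ?_⟩, Finset.mem_insert_self _ _⟩
      · simp only [Finset.mem_insert]
        rintro (h | h)
        exacts [haj h, has h]
      · rw [Finset.insert_comm]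
        exact hAF
  have hcardS2 : ((Finset.shadow F).filter (fun t => j ∈ t)).card =
      (Finset.shadow D').card := by
    rw [hS2]
    apply Finset.card_image_of_injOn
    intro s hs t ht hst
    have h1 : j ∉ s := hshD'j _ hs
    have h2 : j ∉ t := hshD'j _ ht
    rw [← Finset.erase_insert h1, hst, Finset.erase_insert h2]
  -- S1 : shadow elements not containing j
  have hS1 : (Finset.shadow F).filter (fun t => ¬ j ∈ t) =
      (Finset.powersetCard (k - 1) X).filter (fun t => t ∈ Finset.shadow F) := by
    ext t
    simp only [Finset.mem_filter]
    constructor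
    · rintro ⟨ht, hjt⟩
      obtain ⟨a, hat, hins⟩ := Finset.mem_shadow_iff_insert_mem.1 ht
      have hcard : t.card = k - 1 := by
        have := hF _ hins
        rw [Finset.card_insert_of_notMem hat] at this
        omega
      have htX : t ⊆ X := by
        by_cases hAM : insert a t ∈ M
        · obtain ⟨hjA, hAD', _⟩ := hMD' _ hAM
          intro z hz
          have hzA : z ∈ (insert a t).erase j := by
            rw [Finset.mem_erase]
            exact ⟨fun h => hjt (h ▸ hz), Finset.mem_insert_of_mem hz⟩
          have := hD'Y _ hAD' hzA
          exact Finset.mem_of_mem_erase this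
        · have hAC : insert a t ∈ C := by
            by_contra h
            exact hAM (Finset.mem_filter.2 ⟨hins, h⟩)
          rw [hC] at hAC
          have := (Finset.mem_powersetCard.1 hAC).1
          exact fun z hz => this (Finset.mem_insert_of_mem hz)
      exact ⟨Finset.mem_powersetCard.2 ⟨htX, hcard⟩, ht⟩
    · rintro ⟨hpc, ht⟩
      refine ⟨ht, fun hjt => hjX ((Finset.mem_powersetCard.1 hpc).1 hjt)⟩
  -- the bad sets
  set badS : Finset (Finset ℕ) :=
    (Finset.powersetCard (k - 1) X).filter (fun t => t ∉ Finset.shadow F) with hbadSdef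
  have hext : ∀ S : Finset ℕ, S ⊆ X → S.card = k - 1 → S ∉ Finset.shadow F →
      ∀ w ∈ X, w ∉ S → insert w S ∈ M' := by
    intro S hSX hScard hSsh w hwX hwS
    have hwC : insert w S ∈ C := by
      rw [hC]
      refine Finset.mem_powersetCard.2 ⟨?_, ?_⟩
      · intro z hz
        rcases Finset.mem_insert.1 hz with rfl | hz
        · exact hwX
        · exact hSX hz
      · rw [Finset.card_insert_of_notMem hwS]
        omega
    by_contra hwM'
    exact hSsh (Finset.mem_shadow_iff_insert_mem.2 ⟨w, hwS, hCMsubF _ hwC hwM'⟩)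
  have hbad : ∀ S ∈ badS, 0 ∈ S ∧
      (∀ w ∈ Y, w ∉ S.erase 0 → insert w (S.erase 0) ∈ D') ∧ S.erase 0 ∈ Finset.shadow D' := by
    intro S hS
    obtain ⟨hpc, hSsh⟩ := Finset.mem_filter.1 hS
    obtain ⟨hSX, hScard⟩ := Finset.mem_powersetCard.1 hpc
    have h0S : 0 ∈ S := by
      by_contra h0S
      have hcd : (X \ S).card = n - (k - 1) := by rw [Finset.card_sdiff_of_subset hSX, hX, hScard]
      have hne : ((X \ S).erase 0).Nonempty := by
        rw [← Finset.card_pos]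
        have := Finset.card_erase_of_mem (a := 0) (s := X \ S)
        have h0XS : 0 ∈ X \ S := Finset.mem_sdiff.2 ⟨h0X, h0S⟩
        rw [Finset.card_erase_of_mem h0XS, hcd]
        omega
      obtain ⟨w, hw⟩ := hne
      have hw0 : w ≠ 0 := (Finset.mem_erase.1 hw).1
      obtain ⟨hwX, hwS⟩ := Finset.mem_sdiff.1 (Finset.mem_of_mem_erase hw)
      have := hext S hSX hScard hSsh w hwX hwS
      obtain ⟨h0B, _, _⟩ := factB _ this
      rcases Finset.mem_insert.1 h0B with h | h
      · exact hw0 h.symm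
      · exact h0S h
    have hfull : ∀ w ∈ Y, w ∉ S.erase 0 → insert w (S.erase 0) ∈ D' := by
      intro w hwY hwT
      have hw0 : w ≠ 0 := fun h => h0Y (h ▸ hwY)
      have hwS : w ∉ S := by
        intro h
        exact hwT (Finset.mem_erase.2 ⟨hw0, h⟩)
      have hwX : w ∈ X := Finset.mem_of_mem_erase hwY
      have hins := hext S hSX hScard hSsh w hwX hwS
      have hid : (insert w S).erase 0 = insert w (S.erase 0) := by
        rw [Finset.erase_insert_of_ne hw0]
      rw [hD'def, ← hid]
      exact Finset.mem_image.2 ⟨_, hins, rfl⟩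
    refine ⟨h0S, hfull, ?_⟩
    have hTcard : (S.erase 0).card = k - 2 := by
      rw [Finset.card_erase_of_mem h0S, hScard]
      omega
    have hTY : S.erase 0 ⊆ Y := by
      intro z hz
      obtain ⟨hz0, hzS⟩ := Finset.mem_erase.1 hz
      exact Finset.mem_erase.2 ⟨hz0, hSX hzS⟩
    have hne : (Y \ S.erase 0).Nonempty := by
      rw [← Finset.card_pos, Finset.card_sdiff_of_subset hTY, hYcard, hTcard]
      omega
    obtain ⟨w, hw⟩ := hne
    obtain ⟨hwY, hwT⟩ := Finset.mem_sdiff.1 hw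
    exact Finset.mem_shadow_iff_insert_mem.2 ⟨w, hwT, hfull w hwY hwT⟩
  -- counting
  have hsplitF := Finset.card_filter_add_card_filter_not
    (s := Finset.shadow F) (p := fun t => j ∈ t)
  have hsplitP := Finset.card_filter_add_card_filter_not
    (s := Finset.powersetCard (k - 1) X) (p := fun t => t ∈ Finset.shadow F)
  have hcardP : (Finset.powersetCard (k - 1) X).card = n.choose (k - 1) := by
    rw [Finset.card_powersetCard, hX]
  have e1 : Finset.filter (fun a => ¬(fun t : Finset ℕ => j ∈ t) a) (Finset.shadow F)
      = (Finset.powersetCard (k - 1) X).filter (fun t => t ∈ Finset.shadow F) := hS1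
  have e2 : Finset.filter (fun a => ¬(fun t : Finset ℕ => t ∈ Finset.shadow F) a)
      (Finset.powersetCard (k - 1) X) = badS := rfl
  rw [e1, hcardS2] at hsplitF
  rw [e2] at hsplitP
  have hbadimg : badS.image (fun S => S.erase 0) ⊆ Finset.shadow D' := by
    intro T hT
    obtain ⟨S, hS, rfl⟩ := Finset.mem_image.1 hT
    exact (hbad S hS).2.2
  have hbadcard : (badS.image (fun S => S.erase 0)).card = badS.card := by
    apply Finset.card_image_of_injOn
    intro s hs t ht hst
    have h0s : 0 ∈ s := (hbad s hs).1
    have h0t : 0 ∈ t := (hbad t ht).1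
    have hst' : s.erase 0 = t.erase 0 := hst
    rw [← Finset.insert_erase h0s, hst', Finset.insert_erase h0t]
  have hle1 : badS.card ≤ (Finset.shadow D').card := by
    rw [← hbadcard]; exact Finset.card_le_card hbadimg
  have hcardPle : n.choose (k - 1) = ((Finset.powersetCard (k - 1) X).filter
      (fun t => t ∈ Finset.shadow F)).card + badS.card := by
    rw [← hcardP, ← hsplitP]
  have hge : (Finset.shadow D').card ≤ badS.card := by omega
  have himgeq : badS.image (fun S => S.erase 0) = Finset.shadow D' :=
    Finset.eq_of_subset_of_card_le hbadimg (by omega)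
  have hclosed : ∀ T ∈ Finset.shadow D', ∀ w ∈ Y, w ∉ T → insert w T ∈ D' := by
    intro T hT w hwY hwT
    rw [← himgeq] at hT
    obtain ⟨S, hS, rfl⟩ := Finset.mem_image.1 hT
    exact (hbad S hS).2.1 w hwY hwT
  have hD'eq : D' = Finset.powersetCard (k - 1) Y := hexch Y (k - 1) D' hD'sub hD'ne hclosed
  -- assembly
  have hX'card : (insert j Y).card = n := by
    rw [Finset.card_insert_of_notMem hjY, hYcard]; omega
  have hCcard : C.card = n.choose k := by rw [hC, Finset.card_powersetCard, hX]
  have hFsub : F ⊆ Finset.powersetCard k (insert j Y) := by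
    intro A hA
    refine Finset.mem_powersetCard.2 ⟨?_, hF _ hA⟩
    by_cases hAM : A ∈ M
    · obtain ⟨hjA, hAD', hArec⟩ := hMD' _ hAM
      rw [hArec]
      intro z hz
      rcases Finset.mem_insert.1 hz with rfl | hz
      · exact Finset.mem_insert_self _ _
      · exact Finset.mem_insert_of_mem (hD'Y _ hAD' hz)
    · have hAC : A ∈ C := by
        by_contra h
        exact hAM (Finset.mem_filter.2 ⟨hA, h⟩)
      have hAX : A ⊆ X := by rw [hC] at hAC; exact (Finset.mem_powersetCard.1 hAC).1
      have hAk : A.card = k := hF _ hA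
      have h0A : 0 ∉ A := by
        intro h0A
        have hAe : A.erase 0 ∈ D' := by
          rw [hD'eq]
          refine Finset.mem_powersetCard.2 ⟨?_, ?_⟩
          · exact Finset.erase_subset_erase 0 hAX
          · rw [Finset.card_erase_of_mem h0A, hAk]
        rw [hmemD' _] at hAe
        obtain ⟨_, hAM'⟩ := hAe
        rw [Finset.insert_erase h0A] at hAM'
        exact (Finset.mem_filter.1 hAM').2 hA
      intro z hz
      exact Finset.mem_insert_of_mem (Finset.mem_erase.2 ⟨fun h => h0A (h ▸ hz), hAX hz⟩)
  have hcardle : (Finset.powersetCard k (insert j Y)).card ≤ F.card := by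
    rw [Finset.card_powersetCard, hX'card, ← hcardFC, hCcard]
  exact ⟨insert j Y, hX'card, Finset.eq_of_subset_of_card_le hFsub hcardle⟩


open Finset FinsetFamily

lemma compress_eq {j : ℕ} (hj : j ≠ 0) (A : Finset ℕ) (h0 : 0 ∉ A) (hjA : j ∈ A) :
    UV.compress {0} {j} A = insert 0 (A.erase j) := by
  rw [UV.compress_of_disjoint_of_le (by simpa using h0) (by simpa using hjA)]
  ext z
  simp only [Finset.sup_eq_union, Finset.mem_sdiff, Finset.mem_union, Finset.mem_singleton,
    Finset.mem_insert, Finset.mem_erase]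
  constructor
  · rintro ⟨hz1 | hz2, hz3⟩
    · exact Or.inr ⟨hz3, hz1⟩
    · exact Or.inl hz2
  · rintro (rfl | ⟨hz1, hz2⟩)
    · exact ⟨Or.inr rfl, Ne.symm hj⟩
    · exact ⟨Or.inl hz2, hz1⟩

lemma compress_cond {j : ℕ} (A : Finset ℕ) (h : UV.compress {0} {j} A ≠ A) :
    0 ∉ A ∧ j ∈ A := by
  by_cases hc : Disjoint ({0} : Finset ℕ) A ∧ ({j} : Finset ℕ) ≤ A
  · exact ⟨by simpa using hc.1, by simpa using hc.2⟩
  · rw [UV.compress, if_neg hc] at h; exact absurd rfl h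

/-- a measure that strictly decreases under nontrivial `({0},{j})`-compression. -/
def fmeasure (F : Finset (Finset ℕ)) : ℕ := ∑ A ∈ F, ∑ a ∈ A, a

lemma fmeasure_compression_lt {j : ℕ} (hj : j ≠ 0) {F : Finset (Finset ℕ)}
    (h : UV.compression {0} {j} F ≠ F) :
    fmeasure (UV.compression {0} {j} F) < fmeasure F := by
  rw [UV.compression] at h ⊢
  have q : ∀ Q ∈ F.filter (fun A => UV.compress {0} {j} A ∉ F),
      UV.compress {0} {j} Q ≠ Q := by
    simp_rw [Finset.mem_filter]
    intro Q hQ hQeq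
    rw [hQeq] at hQ
    exact hQ.2 hQ.1
  have uA : F.filter (fun A => UV.compress {0} {j} A ∈ F) ∪
      F.filter (fun A => UV.compress {0} {j} A ∉ F) = F :=
    Finset.filter_union_filter_not_eq _ _
  have ne₂ : (F.filter (fun A => UV.compress {0} {j} A ∉ F)).Nonempty := by
    refine Finset.nonempty_iff_ne_empty.2 fun z => h ?_
    rw [Finset.filter_image, z, Finset.image_empty, Finset.union_empty]
    rwa [z, Finset.union_empty] at uA
  rw [fmeasure, fmeasure, Finset.sum_union UV.compress_disjoint]
  conv_rhs => rw [← uA]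
  rw [Finset.sum_union (Finset.disjoint_filter_filter_not _ _ _), add_lt_add_iff_left,
    Finset.filter_image, Finset.sum_image UV.compress_injOn]
  refine Finset.sum_lt_sum_of_nonempty ne₂ fun A hA => ?_
  obtain ⟨h0A, hjA⟩ := compress_cond A (q _ hA)
  rw [compress_eq hj A h0A hjA]
  have h0e : 0 ∉ A.erase j := fun hcontr => h0A (Finset.mem_of_mem_erase hcontr)
  rw [Finset.sum_insert h0e]
  have h2 : j + ∑ a ∈ A.erase j, a = ∑ a ∈ A, a := Finset.add_sum_erase A (fun a => a) hjA
  omega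


lemma chain (k : ℕ) (hk : 1 ≤ k) (F : Finset (Finset ℕ)) (hF : ∀ A ∈ F, A.card = k) :
    ∃ F' : Finset (Finset ℕ), (∀ A ∈ F', A.card = k) ∧ F'.card = F.card ∧
      (Finset.shadow F').card ≤ (Finset.shadow F).card ∧
      (∀ j : ℕ, j ≠ 0 → UV.IsCompressed {0} {j} F') ∧
      (∀ n : ℕ, (Finset.shadow F).card = (Finset.shadow F').card →
        (∃ X', X'.card = n ∧ F' = Finset.powersetCard k X') →
        ∃ X, X.card = n ∧ F = Finset.powersetCard k X) := by
  by_cases H : ∀ j : ℕ, j ≠ 0 → UV.IsCompressed {0} {j} F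
  · exact ⟨F, hF, rfl, le_rfl, H, fun n _ h => h⟩
  · push_neg at H
    obtain ⟨j, hj, hnc⟩ := H
    have hCne : UV.compression {0} {j} F ≠ F := hnc
    have hμ : fmeasure (UV.compression {0} {j} F) < fmeasure F :=
      fmeasure_compression_lt hj hCne
    have hsz : (F : Set (Finset ℕ)).Sized k := fun A hA => hF A hA
    have hCsz := Set.Sized.uvCompression (u := ({0} : Finset ℕ)) (v := {j}) (by simp) hsz
    have hCk : ∀ A ∈ UV.compression {0} {j} F, A.card = k := fun A hA => hCsz hA
    have hCsh : (Finset.shadow (UV.compression {0} {j} F)).card ≤ (Finset.shadow F).card := by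
      apply UV.card_shadow_compression_le
      intro x hx
      refine ⟨j, Finset.mem_singleton_self j, ?_⟩
      have hx0 : x = 0 := Finset.mem_singleton.1 hx
      subst hx0
      rw [Finset.erase_singleton, Finset.erase_singleton]
      exact UV.isCompressed_self _ _
    obtain ⟨F', h1, h2, h3, h4, h5⟩ := chain k hk (UV.compression {0} {j} F) hCk
    refine ⟨F', h1, h2.trans (UV.card_compression _ _ _), h3.trans hCsh, h4, ?_⟩
    intro n heq hclq
    have e1 : (Finset.shadow (UV.compression {0} {j} F)).card = (Finset.shadow F').card := by
      omega
    obtain ⟨Xc, hXc, hFc⟩ := h5 n e1 hclq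
    have hshle : (Finset.shadow F).card ≤ n.choose (k - 1) := by
      by_cases hkX : k ≤ Xc.card
      · have : (Finset.shadow (UV.compression {0} {j} F)).card = n.choose (k - 1) := by
          rw [hFc, shadow_powersetCard hk hkX, Finset.card_powersetCard, hXc]
        omega
      · push_neg at hkX
        have hPempty : Finset.powersetCard k Xc = ∅ := by
          rw [← Finset.card_eq_zero, Finset.card_powersetCard, Nat.choose_eq_zero_of_lt hkX]
        have hCempty : UV.compression {0} {j} F = ∅ := by rw [hFc, hPempty]
        have hFempty : F = ∅ := by
          have := UV.card_compression ({0} : Finset ℕ) {j} F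
          rw [hCempty] at this
          simp only [Finset.card_empty] at this
          exact Finset.card_eq_zero.1 this.symm
        rw [hFempty]
        simp [Finset.shadow_empty]
    exact compression_transfer hk hj hF hFc hXc hshle (fun Y r D hD hne hcl => exchange_closed D hD hne hcl)
termination_by fmeasure F
decreasing_by exact hμ


theorem core (k : ℕ) (hk : 1 ≤ k) (F : Finset (Finset ℕ)) (hF : ∀ A ∈ F, A.card = k)
    (x : ℝ) (hx : ((k : ℕ) : ℝ) ≤ x) (hcard : (F.card : ℝ) = realChoose x k) :
    realChoose x (k - 1) ≤ ((Finset.shadow F).card : ℝ) ∧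
      (((Finset.shadow F).card : ℝ) = realChoose x (k - 1) →
        ∃ (n : ℕ) (X : Finset ℕ), x = n ∧ X.card = n ∧ F = Finset.powersetCard k X) := by
  by_cases hk1 : k = 1
  · subst hk1
    rw [rc_one] at hcard
    have hx1 : (1 : ℝ) ≤ x := by exact_mod_cast hx
    have hF1 : (1 : ℝ) ≤ (F.card : ℝ) := by rw [hcard]; exact hx1
    have hFpos : 1 ≤ F.card := by exact_mod_cast hF1
    have hne : F.Nonempty := Finset.card_pos.1 (by omega)
    obtain ⟨A, hA⟩ := hne
    obtain ⟨a, ha⟩ := Finset.card_eq_one.1 (hF A hA)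
    have hsh : (∅ : Finset ℕ) ∈ Finset.shadow F := by
      rw [Finset.mem_shadow_iff_insert_mem]
      refine ⟨a, Finset.notMem_empty a, ?_⟩
      have he : insert a (∅ : Finset ℕ) = A := by rw [ha]; rfl
      rw [he]; exact hA
    have h1le : (1 : ℝ) ≤ ((Finset.shadow F).card : ℝ) := by
      have : 0 < (Finset.shadow F).card := Finset.card_pos.2 ⟨∅, hsh⟩
      exact_mod_cast this
    constructor
    · show realChoose x 0 ≤ _
      rw [rc_zero]; exact h1le
    · intro _
      refine ⟨F.card, F.biUnion id, hcard.symm, ?_, ?_⟩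
      · rw [Finset.card_biUnion]
        · calc ∑ A ∈ F, (id A).card = ∑ A ∈ F, 1 :=
              Finset.sum_congr rfl (fun A hA => by simpa using hF A hA)
            _ = F.card := by rw [Finset.sum_const, smul_eq_mul, mul_one]
        · intro A hA B hB hAB
          obtain ⟨a', ha'⟩ := Finset.card_eq_one.1 (hF A hA)
          obtain ⟨b', hb'⟩ := Finset.card_eq_one.1 (hF B hB)
          have hab : a' ≠ b' := by
            intro h
            apply hAB
            rw [ha', hb', h]
          simp only [Function.onFun, id_eq]
          rw [ha', hb', Finset.disjoint_singleton]
          exact hab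
      · ext S
        rw [Finset.mem_powersetCard]
        constructor
        · intro hS
          exact ⟨fun z hz => Finset.mem_biUnion.2 ⟨S, hS, hz⟩, hF S hS⟩
        · rintro ⟨hsub, hcard1⟩
          obtain ⟨v, hv⟩ := Finset.card_eq_one.1 hcard1
          subst hv
          obtain ⟨A', hA', hvA⟩ := Finset.mem_biUnion.1 (hsub (Finset.mem_singleton_self v))
          obtain ⟨a', ha'⟩ := Finset.card_eq_one.1 (hF A' hA')
          simp only [id_eq, ha', Finset.mem_singleton] at hvA
          have : A' = {v} := by rw [ha', hvA]
          rw [← this]; exact hA'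
  · have hk2 : 2 ≤ k := by omega
    obtain ⟨K, rfl⟩ : ∃ K, k = K + 2 := ⟨k - 2, by omega⟩
    push_cast at hx
    have hF1 : (1 : ℝ) ≤ (F.card : ℝ) := by
      rw [hcard]; exact rc_one_le (by push_cast; linarith)
    have hFpos : 1 ≤ F.card := by exact_mod_cast hF1
    have hFne : F.Nonempty := Finset.card_pos.1 (by omega)
    obtain ⟨F', hu', hc', hs', hcomp', htrans'⟩ := chain (K + 2) (by omega) F hF
    have hF'ne : F'.Nonempty := Finset.card_pos.1 (by omega)
    have hLsz : ∀ B ∈ link F', B.card = K + 1 := by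
      intro B hB; have := link_sized hu' B hB; omega
    have hsum := card_link_add_card_rest F'
    have hLne : (link F').Nonempty := link_nonempty (by omega) hu' hF'ne hcomp'
    have hLpos : 1 ≤ (link F').card := Finset.card_pos.2 hLne
    have hshadow_eq := card_shadow_eq hcomp'
    have hshadow_eq' : ((Finset.shadow F').card : ℝ) =
        ((link F').card : ℝ) + ((Finset.shadow (link F')).card : ℝ) := by
      exact_mod_cast hshadow_eq
    have hmem1 : ∀ t : ℝ, (K : ℝ) ≤ t → t ∈ Set.Ici ((((K + 1 : ℕ)) : ℝ) - 1) := by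
      intro t ht; simp only [Set.mem_Ici]; push_cast; linarith
    have hmem2 : ∀ t : ℝ, (K : ℝ) + 1 ≤ t → t ∈ Set.Ici ((((K + 2 : ℕ)) : ℝ) - 1) := by
      intro t ht; simp only [Set.mem_Ici]; push_cast; linarith
    -- Step 1
    have hLlb : realChoose (x - 1) (K + 1) ≤ ((link F').card : ℝ) := by
      by_contra hlt
      push_neg at hlt
      have hpascal : realChoose x (K + 2) =
          realChoose (x - 1) (K + 2) + realChoose (x - 1) (K + 1) := by
        have h := rc_pascal (x - 1) (K + 1)
        rw [sub_add_cancel] at h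
        exact h
      have hnat : (link F').card + (rest F').card = F.card := by omega
      have hF0card : ((rest F').card : ℝ) = (F.card : ℝ) - ((link F').card : ℝ) := by
        have h := congrArg (Nat.cast : ℕ → ℝ) hnat
        push_cast at h
        linarith
      have hF0gt : realChoose (x - 1) (K + 2) < ((rest F').card : ℝ) := by
        rw [hF0card, hcard, hpascal]; linarith
      have hF0nonneg : (0 : ℝ) ≤ realChoose (x - 1) (K + 2) := by
        apply rc_nonneg; push_cast; linarith
      have hF0pos : 1 ≤ (rest F').card := by
        by_contra hc0
        push_neg at hc0
        have h0 : (rest F').card = 0 := by omega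
        rw [h0] at hF0gt
        norm_num at hF0gt
        linarith
      obtain ⟨z, hzK, hz⟩ := rc_exists (k := K + 2) (by omega)
        (c := ((rest F').card : ℝ)) (by exact_mod_cast hF0pos)
      push_cast at hzK
      have hzgt : x - 1 < z := by
        by_contra hzle
        push_neg at hzle
        have hmono := rc_monoOn (k := K + 2) (by omega)
          (hmem2 z (by linarith)) (hmem2 (x - 1) (by linarith)) hzle
        simp only at hmono
        rw [hz] at hmono
        linarith
      have hF0sub : ∀ A ∈ rest F', A.card = K + 2 :=
        fun A hA => hu' A (Finset.mem_filter.1 hA).1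
      have hF0lt : (rest F').card < F.card := by omega
      have hrec := core (K + 2) (by omega) (rest F') hF0sub z (by push_cast; linarith) hz.symm
      have hshF0 : realChoose z (K + 1) ≤ (((Finset.shadow (rest F')).card : ℕ) : ℝ) := hrec.1
      have hsubL : Finset.shadow (rest F') ⊆ link F' := shadow_rest_subset_link hcomp'
      have hleL : (((Finset.shadow (rest F')).card : ℕ) : ℝ) ≤ ((link F').card : ℝ) := by
        exact_mod_cast Finset.card_le_card hsubL
      have hmono2 := rc_monoOn (k := K + 1) (by omega)
        (hmem1 (x - 1) (by linarith)) (hmem1 z (by linarith)) (le_of_lt hzgt)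
      simp only at hmono2
      linarith
    -- Step 2
    have hL1 : (1 : ℝ) ≤ (((link F').card : ℕ) : ℝ) := by exact_mod_cast hLpos
    obtain ⟨y, hyK, hy⟩ := rc_exists (k := K + 1) (by omega) hL1
    push_cast at hyK
    have hyx : x - 1 ≤ y := by
      by_contra hyxc
      push_neg at hyxc
      have hlt := rc_strictMonoOn (k := K + 1) (by omega)
        (hmem1 y (by linarith)) (hmem1 (x - 1) (by linarith)) hyxc
      simp only at hlt
      rw [hy] at hlt
      linarith
    -- Step 3
    have hrecL := core (K + 1) (by omega) (link F') hLsz y (by push_cast; linarith) hy.symm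
    have hshLlb : realChoose y K ≤ (((Finset.shadow (link F')).card : ℕ) : ℝ) := hrecL.1
    -- Step 4
    have hpy := rc_pascal y K
    have hstep : realChoose x (K + 1) ≤ realChoose (y + 1) (K + 1) :=
      rc_monoOn (k := K + 1) (by omega)
        (hmem1 x (by linarith)) (hmem1 (y + 1) (by linarith)) (by linarith)
    have hfinal1 : realChoose x (K + 1) ≤ ((Finset.shadow F').card : ℝ) := by
      rw [hshadow_eq']
      linarith
    have hshle : ((Finset.shadow F').card : ℝ) ≤ ((Finset.shadow F).card : ℝ) := by
      exact_mod_cast hs'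
    constructor
    · exact hfinal1.trans hshle
    · intro heq
      have heq' : ((Finset.shadow F).card : ℝ) = realChoose x (K + 1) := heq
      have hF'eq : ((Finset.shadow F').card : ℝ) = realChoose x (K + 1) :=
        le_antisymm (by linarith) hfinal1
      have hup : realChoose (y + 1) (K + 1) ≤ realChoose x (K + 1) := by
        rw [← hF'eq, hshadow_eq']
        linarith
      have hyeq : realChoose (y + 1) (K + 1) = realChoose x (K + 1) :=
        le_antisymm hup hstep
      have hxy : x = y + 1 := by
        rcases lt_trichotomy x (y + 1) with h | h | h
        · exfalso
          have hlt := rc_strictMonoOn (k := K + 1) (by omega)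
            (hmem1 x (by linarith)) (hmem1 (y + 1) (by linarith)) h
          simp only at hlt
          linarith
        · exact h
        · exfalso
          have hlt := rc_strictMonoOn (k := K + 1) (by omega)
            (hmem1 (y + 1) (by linarith)) (hmem1 x (by linarith)) h
          simp only at hlt
          linarith
      have hshLeq : (((Finset.shadow (link F')).card : ℕ) : ℝ) = realChoose y K := by
        have hLcast : (((link F').card : ℕ) : ℝ) = realChoose y (K + 1) := hy.symm
        have := hshadow_eq'
        rw [hF'eq, ← hyeq, hpy] at this
        linarith
      obtain ⟨m, Y, hym, hYm, hLY⟩ := hrecL.2 hshLeq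
      have hmK : K + 1 ≤ m := by
        have hc1 : (((K + 1 : ℕ)) : ℝ) ≤ (m : ℝ) := by rw [← hym]; push_cast; linarith
        exact_mod_cast hc1
      have h0Y : 0 ∉ Y := by
        intro h0Y
        have hYe : K ≤ (Y.erase 0).card := by
          rw [Finset.card_erase_of_mem h0Y, hYm]; omega
        obtain ⟨T, hTsub, hTcard⟩ := Finset.exists_subset_card_eq hYe
        have h0T : 0 ∉ T := fun h => (Finset.mem_erase.1 (hTsub h)).1 rfl
        have hS : insert 0 T ∈ Finset.powersetCard (K + 1) Y := by
          refine Finset.mem_powersetCard.2 ⟨?_, ?_⟩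
          · intro z hz
            rcases Finset.mem_insert.1 hz with rfl | hz
            · exact h0Y
            · exact Finset.mem_of_mem_erase (hTsub hz)
          · rw [Finset.card_insert_of_notMem h0T, hTcard]
        rw [← hLY] at hS
        exact link_zero_not_mem hS (Finset.mem_insert_self 0 T)
      have hF0subY : ∀ A ∈ rest F', A ⊆ Y := by
        intro A hA z hz
        have hAcard : A.card = K + 2 := hu' A (Finset.mem_filter.1 hA).1
        have hAe : (A.erase z).Nonempty := by
          rw [← Finset.card_pos, Finset.card_erase_of_mem hz, hAcard]; omega
        obtain ⟨a, ha⟩ := hAe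
        have haz : a ≠ z := (Finset.mem_erase.1 ha).1
        have haA : a ∈ A := Finset.mem_of_mem_erase ha
        have hsh0 : A.erase a ∈ Finset.shadow (rest F') := Finset.erase_mem_shadow hA haA
        have hmemL := shadow_rest_subset_link hcomp' hsh0
        rw [hLY] at hmemL
        have hsubY := (Finset.mem_powersetCard.1 hmemL).1
        exact hsubY (Finset.mem_erase.2 ⟨fun h => haz h.symm, hz⟩)
      have hF'sub : F' ⊆ Finset.powersetCard (K + 2) (insert 0 Y) := by
        intro A hA
        refine Finset.mem_powersetCard.2 ⟨?_, hu' A hA⟩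
        by_cases h0A : 0 ∈ A
        · have hAL : A.erase 0 ∈ link F' := mem_link.2
            ⟨Finset.notMem_erase _ _, by rw [Finset.insert_erase h0A]; exact hA⟩
          rw [hLY] at hAL
          have hAsub := (Finset.mem_powersetCard.1 hAL).1
          intro z hz
          by_cases hz0 : z = 0
          · subst hz0; exact Finset.mem_insert_self _ _
          · exact Finset.mem_insert_of_mem (hAsub (Finset.mem_erase.2 ⟨hz0, hz⟩))
        · have hAF0 : A ∈ rest F' := Finset.mem_filter.2 ⟨hA, h0A⟩
          exact fun z hz => Finset.mem_insert_of_mem (hF0subY A hAF0 hz)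
      have hxm1 : x = (((m + 1 : ℕ)) : ℝ) := by rw [hxy, hym]; push_cast; ring
      have hcardF'nat : F'.card = (m + 1).choose (K + 2) := by
        have hcf : (F'.card : ℝ) = (((m + 1).choose (K + 2) : ℕ) : ℝ) := by
          calc (F'.card : ℝ) = (F.card : ℝ) := by exact_mod_cast hc'
            _ = realChoose x (K + 2) := hcard
            _ = realChoose (((m + 1 : ℕ)) : ℝ) (K + 2) := by rw [hxm1]
            _ = (((m + 1).choose (K + 2) : ℕ) : ℝ) := rc_cast _ _
        exact_mod_cast hcf
      have hins0card : (insert 0 Y).card = m + 1 := by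
        rw [Finset.card_insert_of_notMem h0Y, hYm]
      have hPcard : (Finset.powersetCard (K + 2) (insert 0 Y)).card = (m + 1).choose (K + 2) := by
        rw [Finset.card_powersetCard, hins0card]
      have hF'eq2 : F' = Finset.powersetCard (K + 2) (insert 0 Y) :=
        Finset.eq_of_subset_of_card_le hF'sub (by omega)
      have hsheqnat : (Finset.shadow F).card = (Finset.shadow F').card := by
        have hcc : ((Finset.shadow F).card : ℝ) = ((Finset.shadow F').card : ℝ) := by
          rw [heq', hF'eq]
        exact_mod_cast hcc
      obtain ⟨X, hXcard, hFX⟩ := htrans' (m + 1) hsheqnat ⟨insert 0 Y, hins0card, hF'eq2⟩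
      exact ⟨m + 1, X, hxm1, hXcard, hFX⟩
termination_by (k, F.card)
decreasing_by
  all_goals subst_vars
  · exact Prod.Lex.right _ hF0lt
  · exact Prod.Lex.left _ _ (by omega)


lemma image_erase_comm {V : Type*} [DecidableEq V] {f : V → ℕ} {s A : Finset V}
    (hinj : Set.InjOn f ↑s) (hAs : A ⊆ s) {a : V} (ha : a ∈ A) :
    (A.erase a).image f = (A.image f).erase (f a) := by
  ext z
  simp only [Finset.mem_image, Finset.mem_erase]
  constructor
  · rintro ⟨w, ⟨hwa, hwA⟩, rfl⟩
    refine ⟨?_, w, hwA, rfl⟩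
    intro h
    exact hwa (hinj (hAs hwA) (hAs ha) h)
  · rintro ⟨hz, w, hwA, rfl⟩
    exact ⟨w, ⟨fun h => hz (by rw [h]), hwA⟩, rfl⟩

lemma choose_strict_mono_top {c n k : ℕ} (hk : 1 ≤ k) (hkc : k ≤ c) (hcn : c < n) :
    c.choose k < n.choose k := by
  obtain ⟨K, rfl⟩ : ∃ K, k = K + 1 := ⟨k - 1, by omega⟩
  have h1 : c.choose (K + 1) < (c + 1).choose (K + 1) := by
    have hrw := Nat.choose_succ_succ c K
    simp only [Nat.succ_eq_add_one] at hrw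
    have h2 : 0 < c.choose K := Nat.choose_pos (by omega)
    omega
  exact lt_of_lt_of_le h1 (Nat.choose_le_choose _ (by omega))

end LKK

/-- Lovász's version of the Kruskal–Katona theorem: if `|F| = C(x,k)` with `x ≥ k`
then `|∂F| ≥ C(x,k−1)`, with equality iff `x ∈ ℕ` and `F` consists of all `k`-subsets
of some `x`-element set. -/
theorem lovasz_kruskal_katona {V : Type*} [DecidableEq V] {k : ℕ} (hk : 1 ≤ k)
    (F : Finset (Finset V)) (hF : ∀ X ∈ F, X.card = k) (x : ℝ) (hx : (k : ℝ) ≤ x)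
    (hcard : (F.card : ℝ) = realChoose x k) :
    realChoose x (k - 1) ≤ (F.shadow.card : ℝ) ∧
      ((F.shadow.card : ℝ) = realChoose x (k - 1) →
        ∃ n : ℕ, x = n ∧ ∃ X : Finset V, X.card = n ∧ F = Finset.powersetCard k X) := by
  classical
  set s : Finset V := F.sup id with hsdef
  have hmemsub : ∀ A ∈ F, A ⊆ s := fun A hA => Finset.le_sup (f := id) hA
  obtain ⟨f, hinj⟩ : ∃ f : V → ℕ, Set.InjOn f ↑s := by
    refine ⟨fun v => if h : v ∈ s then ((s.equivFin ⟨v, h⟩ : Fin s.card) : ℕ) else 0, ?_⟩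
    intro u hu v hv huv
    simp only [Finset.mem_coe] at hu hv
    simp only [dif_pos hu, dif_pos hv] at huv
    have h2 : s.equivFin ⟨u, hu⟩ = s.equivFin ⟨v, hv⟩ := Fin.ext huv
    have h3 := s.equivFin.injective h2
    exact congrArg Subtype.val h3
  have hcardim : ∀ A : Finset V, A ⊆ s → (A.image f).card = A.card := by
    intro A hAs
    exact Finset.card_image_of_injOn (hinj.mono (Finset.coe_subset.2 hAs))
  have himg_inj : ∀ A B : Finset V, A ⊆ s → B ⊆ s → A.image f = B.image f → A = B := by
    intro A B hAs hBs hAB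
    apply Finset.Subset.antisymm
    · intro z hz
      have hmem : f z ∈ B.image f := by rw [← hAB]; exact Finset.mem_image_of_mem f hz
      obtain ⟨w, hwB, hwz⟩ := Finset.mem_image.1 hmem
      rwa [← hinj (hBs hwB) (hAs hz) hwz]
    · intro z hz
      have hmem : f z ∈ A.image f := by rw [hAB]; exact Finset.mem_image_of_mem f hz
      obtain ⟨w, hwA, hwz⟩ := Finset.mem_image.1 hmem
      rwa [← hinj (hAs hwA) (hBs hz) hwz]
  set G : Finset (Finset ℕ) := F.image (fun A => A.image f) with hGdef
  have hGcard : G.card = F.card := by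
    rw [hGdef]
    apply Finset.card_image_of_injOn
    intro A hA B hB hAB
    exact himg_inj A B (hmemsub A hA) (hmemsub B hB) hAB
  have hGk : ∀ B ∈ G, B.card = k := by
    intro B hB
    rw [hGdef] at hB
    obtain ⟨A, hA, rfl⟩ := Finset.mem_image.1 hB
    rw [hcardim A (hmemsub A hA)]
    exact hF A hA
  have hGsh : Finset.shadow G = (Finset.shadow F).image (fun A => A.image f) := by
    ext t
    constructor
    · intro ht
      obtain ⟨B, hB, b, hb, rfl⟩ := Finset.mem_shadow_iff.1 ht
      rw [hGdef] at hB
      obtain ⟨A, hA, rfl⟩ := Finset.mem_image.1 hB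
      obtain ⟨a0, ha0, rfl⟩ := Finset.mem_image.1 hb
      rw [← LKK.image_erase_comm hinj (hmemsub A hA) ha0]
      exact Finset.mem_image_of_mem _ (Finset.erase_mem_shadow hA ha0)
    · intro ht
      obtain ⟨B, hB, rfl⟩ := Finset.mem_image.1 ht
      obtain ⟨A, hA, a, ha, rfl⟩ := Finset.mem_shadow_iff.1 hB
      rw [LKK.image_erase_comm hinj (hmemsub A hA) ha]
      apply Finset.erase_mem_shadow
      · rw [hGdef]; exact Finset.mem_image_of_mem _ hA
      · exact Finset.mem_image_of_mem f ha
  have hshsub : ∀ B ∈ Finset.shadow F, B ⊆ s := by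
    intro B hB
    obtain ⟨A, hA, hsub⟩ := Finset.exists_subset_of_mem_shadow hB
    exact hsub.trans (hmemsub A hA)
  have hGshcard : (Finset.shadow G).card = (Finset.shadow F).card := by
    rw [hGsh]
    apply Finset.card_image_of_injOn
    intro A hA B hB hAB
    exact himg_inj A B (hshsub A hA) (hshsub B hB) hAB
  have hGcardR : (G.card : ℝ) = realChoose x k := by rw [hGcard]; exact hcard
  obtain ⟨hineq, heqc⟩ := LKK.core k hk G hGk x hx hGcardR
  constructor
  · rw [← hGshcard]
    exact hineq
  · intro heqF
    have heqG : ((Finset.shadow G).card : ℝ) = realChoose x (k - 1) := by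
      rw [hGshcard]; exact heqF
    obtain ⟨n, X', hxn, hX'card, hGX⟩ := heqc heqG
    have hF1 : (1 : ℝ) ≤ (F.card : ℝ) := by rw [hcard]; exact LKK.rc_one_le hx
    have hFpos : 1 ≤ F.card := by exact_mod_cast hF1
    set X : Finset V := s.filter (fun v => f v ∈ X') with hXdef
    have hFsub : F ⊆ Finset.powersetCard k X := by
      intro A hA
      refine Finset.mem_powersetCard.2 ⟨?_, hF A hA⟩
      intro v hv
      rw [hXdef, Finset.mem_filter]
      refine ⟨hmemsub A hA hv, ?_⟩
      have himg : A.image f ∈ Finset.powersetCard k X' := by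
        rw [← hGX, hGdef]; exact Finset.mem_image_of_mem _ hA
      exact (Finset.mem_powersetCard.1 himg).1 (Finset.mem_image_of_mem f hv)
    have hXsub : X.image f ⊆ X' := by
      intro z hz
      obtain ⟨v, hv, rfl⟩ := Finset.mem_image.1 hz
      rw [hXdef] at hv
      exact (Finset.mem_filter.1 hv).2
    have hXle : X.card ≤ n := by
      have h1 : (X.image f).card = X.card := hcardim X (by rw [hXdef]; exact Finset.filter_subset _ _)
      have h2 := Finset.card_le_card hXsub
      omega
    have hFcardn : F.card = n.choose k := by
      have h1 : G.card = n.choose k := by rw [hGX, Finset.card_powersetCard, hX'card]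
      omega
    have hFle : F.card ≤ X.card.choose k := by
      have h2 := Finset.card_le_card hFsub
      rwa [Finset.card_powersetCard] at h2
    have hkX : k ≤ X.card := by
      by_contra h
      push_neg at h
      rw [Nat.choose_eq_zero_of_lt h] at hFle
      omega
    have hXn : X.card = n := by
      by_contra h
      have hlt : X.card < n := by omega
      have := LKK.choose_strict_mono_top hk hkX hlt
      omega
    have hPX : (Finset.powersetCard k X).card = F.card := by
      rw [Finset.card_powersetCard, hXn, hFcardn]
    exact ⟨n, hxn, X, hXn, Finset.eq_of_subset_of_card_le hFsub (by omega)⟩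
end

section
/- For a ≥ 3, the complement of H_0(a) is connected; consequently, for r ≥ 2 and a ≥ 3, the graphs J_r(a,t) for 0 ≤ t ≤ ⌊r/2⌋ are pairwise non-isomorphic, since the complement of J_r(a,t) has exactly r − 2t connected components of size a and t connected components of size 2a. -/
/-- `J_r(a,t)`: the join of `t` disjoint copies of `H_0(a)` (occupying the pairs of
classes `{0,1},…,{2t-2,2t-1}`) with the complete `(r-2t)`-partite graph with classes
of size `a`.  The vertex `(i,x)` is the `x`-th vertex of the `i`-th class. -/
def Jgraph (r a t : ℕ) : SimpleGraph (Fin r × Fin a) where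
  Adj x y :=
    if x.1 = y.1 then (x.1 : ℕ) < 2*t ∧ x.2 ≠ y.2
    else if (x.1 : ℕ)/2 = (y.1 : ℕ)/2 ∧ (x.1 : ℕ) < 2*t ∧ (y.1 : ℕ) < 2*t then x.2 = y.2
    else True
  symm := ⟨by
    rintro ⟨i,x⟩ ⟨j,y⟩ h
    dsimp at *
    split_ifs at h ⊢ <;> simp_all [eq_comm] <;> omega⟩
  loopless := ⟨by rintro ⟨i,x⟩ h; simp_all⟩

private lemma walk_const {V : Type*} {G : SimpleGraph V} {f : V → ℕ}
    (h : ∀ u v, G.Adj u v → f u = f v) {u v : V} (huv : G.Reachable u v) : f u = f v := by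
  obtain ⟨w⟩ := huv
  induction w with
  | nil => rfl
  | cons h' p ih => exact (h _ _ h').trans ih

private lemma exists_third {a : ℕ} (ha : 3 ≤ a) (u v : Fin a) :
    ∃ w : Fin a, w ≠ u ∧ w ≠ v := by
  have h : ({u, v}ᶜ : Finset (Fin a)).Nonempty := by
    rw [← Finset.card_pos, Finset.card_compl]
    have := Finset.card_insert_le u ({v} : Finset (Fin a))
    simp only [Finset.card_singleton, Fintype.card_fin] at *
    omega
  obtain ⟨w, hw⟩ := h
  simp only [Finset.mem_compl, Finset.mem_insert, Finset.mem_singleton, not_or] at hw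
  exact ⟨w, hw.1, hw.2⟩

private def kap (t : ℕ) {r a : ℕ} (x : Fin r × Fin a) : ℕ :=
  if (x.1 : ℕ) < 2*t then (x.1 : ℕ)/2 else (x.1 : ℕ)

private lemma Jcompl_adj {r a t : ℕ} (x y : Fin r × Fin a) :
    (Jgraph r a t)ᶜ.Adj x y ↔
      ((x.1 = y.1 ∧ 2*t ≤ (x.1:ℕ) ∧ x.2 ≠ y.2) ∨
       (x.1 ≠ y.1 ∧ (x.1:ℕ)/2 = (y.1:ℕ)/2 ∧ (x.1:ℕ) < 2*t ∧ (y.1:ℕ) < 2*t ∧ x.2 ≠ y.2)) := by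
  obtain ⟨i, u⟩ := x; obtain ⟨j, v⟩ := y
  rw [SimpleGraph.compl_adj]
  show ((i,u) ≠ (j,v) ∧ ¬ (if i = j then (i:ℕ) < 2*t ∧ u ≠ v
    else if (i:ℕ)/2 = (j:ℕ)/2 ∧ (i:ℕ) < 2*t ∧ (j:ℕ) < 2*t then u = v else True)) ↔ _
  dsimp only
  by_cases hij : i = j
  · subst hij
    rw [if_pos rfl]
    constructor
    · rintro ⟨h1, h2⟩
      have hu : u ≠ v := fun h => h1 (by rw [h])
      left
      exact ⟨rfl, by by_contra hlt; exact h2 ⟨by omega, hu⟩, hu⟩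
    · rintro (⟨-, h1, h2⟩ | ⟨h1, -⟩)
      · exact ⟨fun h => h2 (congrArg Prod.snd h), fun h => absurd h.1 (not_lt.mpr h1)⟩
      · exact absurd rfl h1
  · simp only [if_neg hij]
    by_cases hp : (i:ℕ)/2 = (j:ℕ)/2 ∧ (i:ℕ) < 2*t ∧ (j:ℕ) < 2*t
    · simp only [if_pos hp]
      constructor
      · rintro ⟨-, h2⟩
        exact Or.inr ⟨hij, hp.1, hp.2.1, hp.2.2, h2⟩
      · rintro (⟨h1, -⟩ | ⟨-, -, -, -, h⟩)
        · exact absurd h1 hij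
        · exact ⟨fun hh => h (Prod.ext_iff.mp hh).2, h⟩
    · simp only [if_neg hp, not_true, and_false, false_iff]
      rintro (⟨h1, -⟩ | ⟨-, h2, h3, h4, -⟩)
      · exact hij h1
      · exact hp ⟨h2, h3, h4⟩

private lemma kap_adj {r a t : ℕ} {x y : Fin r × Fin a}
    (h : (Jgraph r a t)ᶜ.Adj x y) : kap t x = kap t y := by
  rcases (Jcompl_adj x y).mp h with ⟨h1, -⟩ | ⟨-, h2, h3, h4, -⟩
  · simp [kap, h1]
  · simp only [kap, if_pos h3, if_pos h4, h2]

private lemma reach_of_kap {r a t : ℕ} (ha : 3 ≤ a) (htr : 2*t ≤ r)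
    {x y : Fin r × Fin a} (h : kap t x = kap t y) : (Jgraph r a t)ᶜ.Reachable x y := by
  by_cases hxy : x = y
  · exact hxy ▸ SimpleGraph.Reachable.refl x
  by_cases hx : (x.1:ℕ) < 2*t <;> by_cases hy : (y.1:ℕ) < 2*t
  · -- both in pairs
    rw [kap, kap, if_pos hx, if_pos hy] at h
    by_cases hij : x.1 = y.1
    · -- same class, x.2 ≠ y.2 ; go via the partner class
      have hv : x.2 ≠ y.2 := fun hv => hxy (Prod.ext hij hv)
      obtain ⟨jn, hjnlt, hjne, hjhalf, hjt⟩ :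
          ∃ jn, jn < r ∧ jn ≠ (x.1:ℕ) ∧ jn/2 = (x.1:ℕ)/2 ∧ jn < 2*t :=
        ⟨if (x.1:ℕ) % 2 = 0 then (x.1:ℕ)+1 else (x.1:ℕ)-1, by split_ifs <;> omega⟩
      obtain ⟨c, hc1, hc2⟩ := exists_third ha x.2 y.2
      have h1 : (Jgraph r a t)ᶜ.Adj x (⟨jn, hjnlt⟩, c) := by
        rw [Jcompl_adj]
        right
        refine ⟨fun hh => hjne ?_, hjhalf.symm, hx, hjt, fun hh => hc1 hh.symm⟩
        exact (congrArg Fin.val hh).symm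
      have h2 : (Jgraph r a t)ᶜ.Adj (⟨jn, hjnlt⟩, c) y := by
        rw [Jcompl_adj]
        right
        refine ⟨fun hh => hjne ?_, by rw [hjhalf, hij], hjt, hy, hc2⟩
        exact (congrArg Fin.val hh).trans (congrArg Fin.val hij.symm)
      exact h1.reachable.trans h2.reachable
    · by_cases hv : x.2 = y.2
      · -- same vertex index, different class of the pair: path of length 3
        obtain ⟨c, hc1, -⟩ := exists_third ha x.2 x.2
        obtain ⟨d, hd1, hd2⟩ := exists_third ha c y.2
        have h1 : (Jgraph r a t)ᶜ.Adj x (y.1, c) := by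
          rw [Jcompl_adj]; right
          exact ⟨hij, h, hx, hy, fun hh => hc1 hh.symm⟩
        have h2 : (Jgraph r a t)ᶜ.Adj (y.1, c) (x.1, d) := by
          rw [Jcompl_adj]; right
          exact ⟨fun hh => hij hh.symm, h.symm, hy, hx, fun hh => hd1 hh.symm⟩
        have h3 : (Jgraph r a t)ᶜ.Adj (x.1, d) y := by
          rw [Jcompl_adj]; right
          exact ⟨hij, h, hx, hy, hd2⟩
        exact (h1.reachable.trans h2.reachable).trans h3.reachable
      · exact ((Jcompl_adj x y).mpr (Or.inr ⟨hij, h, hx, hy, hv⟩)).reachable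
  · rw [kap, kap, if_pos hx, if_neg hy] at h; omega
  · rw [kap, kap, if_neg hx, if_pos hy] at h; omega
  · rw [kap, kap, if_neg hx, if_neg hy] at h
    have hij : x.1 = y.1 := Fin.ext h
    have hv : x.2 ≠ y.2 := fun hv => hxy (Prod.ext hij hv)
    exact ((Jcompl_adj x y).mpr (Or.inl ⟨hij, by omega, hv⟩)).reachable

private lemma reach_iff_kap {r a t : ℕ} (ha : 3 ≤ a) (htr : 2*t ≤ r)
    (x y : Fin r × Fin a) : (Jgraph r a t)ᶜ.Reachable x y ↔ kap t x = kap t y :=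
  ⟨walk_const (fun _ _ => kap_adj), reach_of_kap ha htr⟩

open SimpleGraph in
private lemma card_supp {r a t : ℕ} (ha : 3 ≤ a) (htr : 2*t ≤ r) (v : Fin r × Fin a) :
    Nat.card ((Jgraph r a t)ᶜ.connectedComponentMk v).supp
      = if kap t v < t then 2*a else a := by
  set n := kap t v with hn
  have hs : ((Jgraph r a t)ᶜ.connectedComponentMk v).supp = {y | kap t y = n} := by
    ext y
    simp only [ConnectedComponent.mem_supp_iff, ConnectedComponent.eq, Set.mem_setOf_eq]
    exact reach_iff_kap ha htr y v
  rw [hs]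
  by_cases hv : n < t
  · rw [if_pos hv]
    have hchar : {y : Fin r × Fin a | kap t y = n}
        = {y | (y.1:ℕ) = 2*n ∨ (y.1:ℕ) = 2*n+1} := by
      ext y
      simp only [Set.mem_setOf_eq, kap]
      split_ifs <;> omega
    rw [hchar]
    have e : ↥{y : Fin r × Fin a | (y.1:ℕ) = 2*n ∨ (y.1:ℕ) = 2*n+1} ≃ Fin 2 × Fin a :=
      { toFun := fun y => (⟨(y.1.1:ℕ) - 2*n, by have := y.2; simp only [Set.mem_setOf_eq] at this; omega⟩, y.1.2)
        invFun := fun p => ⟨(⟨2*n + (p.1:ℕ), by have := p.1.2; omega⟩, p.2),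
          by have := p.1.2; simp only [Set.mem_setOf_eq]; omega⟩
        left_inv := fun y => Subtype.ext (Prod.ext (Fin.ext
          (by have := y.2; simp only [Set.mem_setOf_eq] at this; dsimp only; omega)) rfl)
        right_inv := fun p => Prod.ext (Fin.ext (by dsimp only; omega)) rfl }
    rw [Nat.card_congr e]
    simp [Nat.card_eq_fintype_card]
  · rw [if_neg hv]
    have hnr : n < r := by
      have := v.1.2
      rw [hn]; unfold kap; split_ifs <;> omega
    have h2tn : 2*t ≤ n := by
      rw [hn] at hv ⊢; unfold kap at hv ⊢; split_ifs at hv ⊢ <;> omega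
    have hchar : {y : Fin r × Fin a | kap t y = n} = {y | (y.1:ℕ) = n} := by
      ext y
      simp only [Set.mem_setOf_eq, kap]
      split_ifs <;> omega
    rw [hchar]
    have e : ↥{y : Fin r × Fin a | (y.1:ℕ) = n} ≃ Fin a :=
      { toFun := fun y => y.1.2
        invFun := fun z => ⟨(⟨n, hnr⟩, z), rfl⟩
        left_inv := fun y => Subtype.ext (Prod.ext (Fin.ext
          (by have := y.2; simp only [Set.mem_setOf_eq] at this; simp [this])) rfl)
        right_inv := fun z => rfl }
    rw [Nat.card_congr e]
    simp [Nat.card_eq_fintype_card]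

private def vtx (r a t : ℕ) (ha0 : 0 < a) (htr : 2*t ≤ r)
    (n : {n : ℕ // n < t ∨ (2*t ≤ n ∧ n < r)}) : Fin r × Fin a :=
  (⟨if n.1 < t then 2*n.1 else n.1, by rcases n.2 with h | h <;> split_ifs <;> omega⟩,
   ⟨0, ha0⟩)

private lemma kap_vtx {r a t : ℕ} (ha0 : 0 < a) (htr : 2*t ≤ r)
    (n : {n : ℕ // n < t ∨ (2*t ≤ n ∧ n < r)}) : kap t (vtx r a t ha0 htr n) = n.1 := by
  rcases n with ⟨n, hn⟩
  unfold kap vtx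
  dsimp only
  rcases hn with h | h
  · split_ifs <;> omega
  · split_ifs <;> omega

open SimpleGraph in
private noncomputable def Jcomp (r a t : ℕ) (ha : 3 ≤ a) (htr : 2*t ≤ r) :
    (Jgraph r a t)ᶜ.ConnectedComponent ≃ {n : ℕ // n < t ∨ (2*t ≤ n ∧ n < r)} where
  toFun := ConnectedComponent.lift
    (fun x => ⟨kap t x, by
      by_cases hx : (x.1:ℕ) < 2*t
      · left; simp only [kap, if_pos hx]; omega
      · right; simp only [kap, if_neg hx]; exact ⟨by omega, x.1.2⟩⟩)
    (fun u w p _ => Subtype.ext (walk_const (fun _ _ => kap_adj) ⟨p⟩))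
  invFun := fun n => (Jgraph r a t)ᶜ.connectedComponentMk (vtx r a t (by omega) htr n)
  left_inv := by
    intro C
    refine C.ind fun v => ?_
    exact SimpleGraph.ConnectedComponent.eq.mpr
      (reach_of_kap ha htr (kap_vtx (by omega) htr _))
  right_inv := fun n => Subtype.ext (kap_vtx (by omega) htr n)

open SimpleGraph in
private lemma card_supp_comp {r a t : ℕ} (ha : 3 ≤ a) (htr : 2*t ≤ r)
    (C : (Jgraph r a t)ᶜ.ConnectedComponent) :
    Nat.card C.supp = if (Jcomp r a t ha htr C).1 < t then 2*a else a := by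
  refine C.ind fun v => ?_
  exact card_supp ha htr v

private lemma countA {r a t : ℕ} (ha : 3 ≤ a) (htr : 2*t ≤ r) :
    Nat.card {C : (Jgraph r a t)ᶜ.ConnectedComponent // Nat.card C.supp = a} = r - 2*t := by
  have E1 : {C : (Jgraph r a t)ᶜ.ConnectedComponent // Nat.card C.supp = a}
      ≃ {n : {n : ℕ // n < t ∨ (2*t ≤ n ∧ n < r)} // ¬ (n.1 < t)} := by
    refine Equiv.subtypeEquiv (Jcomp r a t ha htr) fun C => ?_
    rw [card_supp_comp ha htr C]
    split_ifs with h <;> simp [h] <;> omega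
  have E2 : {n : {n : ℕ // n < t ∨ (2*t ≤ n ∧ n < r)} // ¬ (n.1 < t)} ≃ Fin (r - 2*t) :=
    { toFun := fun m => ⟨m.1.1 - 2*t, by
        have h1 := m.1.2; have h2 := m.2; rcases h1 with h | h <;> omega⟩
      invFun := fun k => ⟨⟨k.1 + 2*t, Or.inr ⟨by omega, by have := k.2; omega⟩⟩, by dsimp only; omega⟩
      left_inv := fun m => Subtype.ext (Subtype.ext (by
        have h1 := m.1.2; have h2 := m.2; dsimp only; rcases h1 with h | h <;> omega))
      right_inv := fun k => Fin.ext (by dsimp only; omega) }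
  rw [Nat.card_congr (E1.trans E2)]
  simp [Nat.card_eq_fintype_card]

private lemma count2A {r a t : ℕ} (ha : 3 ≤ a) (htr : 2*t ≤ r) :
    Nat.card {C : (Jgraph r a t)ᶜ.ConnectedComponent // Nat.card C.supp = 2*a} = t := by
  have E1 : {C : (Jgraph r a t)ᶜ.ConnectedComponent // Nat.card C.supp = 2*a}
      ≃ {n : {n : ℕ // n < t ∨ (2*t ≤ n ∧ n < r)} // n.1 < t} := by
    refine Equiv.subtypeEquiv (Jcomp r a t ha htr) fun C => ?_
    rw [card_supp_comp ha htr C]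
    split_ifs with h <;> simp [h] <;> omega
  have E2 : {n : {n : ℕ // n < t ∨ (2*t ≤ n ∧ n < r)} // n.1 < t} ≃ Fin t :=
    { toFun := fun m => ⟨m.1.1, m.2⟩
      invFun := fun k => ⟨⟨k.1, Or.inl k.2⟩, k.2⟩
      left_inv := fun m => Subtype.ext (Subtype.ext rfl)
      right_inv := fun k => rfl }
  rw [Nat.card_congr (E1.trans E2)]
  simp [Nat.card_eq_fintype_card]

private def isoCompl {V W : Type*} {G : SimpleGraph V} {H : SimpleGraph W}
    (φ : G ≃g H) : Gᶜ ≃g Hᶜ where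
  toEquiv := φ.toEquiv
  map_rel_iff' := by
    intro u v
    simp only [SimpleGraph.compl_adj, ne_eq, EmbeddingLike.apply_eq_iff_eq]
    exact and_congr_right fun _ => not_congr φ.map_rel_iff

private lemma card_comp_iso {V W : Type*} {G : SimpleGraph V} {H : SimpleGraph W}
    (φ : G ≃g H) (k : ℕ) :
    Nat.card {C : G.ConnectedComponent // Nat.card C.supp = k}
      = Nat.card {C : H.ConnectedComponent // Nat.card C.supp = k} := by
  apply Nat.card_congr
  refine Equiv.subtypeEquiv φ.connectedComponentEquiv fun C => ?_
  rw [Nat.card_congr (SimpleGraph.ConnectedComponent.isoEquivSupp φ C)]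

private lemma Hcompl_adj {a : ℕ} (i : Fin a) (j : Fin (a+0)) :
    ((Hgraph a 0)ᶜ).Adj (Sum.inl i) (Sum.inr j) ↔ (j:ℕ) ≠ (i:ℕ) := by
  rw [SimpleGraph.compl_adj]
  show (Sum.inl i ≠ Sum.inr j ∧ ¬ ((j:ℕ) = (i:ℕ))) ↔ _
  simp

private lemma Hcompl_connected {a : ℕ} (ha : 3 ≤ a) : ((Hgraph a 0)ᶜ).Connected := by
  have h0 : (0:ℕ) < a := by omega
  set z : Fin a ⊕ Fin (a+0) := Sum.inl ⟨0, h0⟩ with hz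
  have key : ∀ v, ((Hgraph a 0)ᶜ).Reachable v z := by
    rintro (i | j)
    · by_cases hi : (i:ℕ) = 0
      · rw [show Sum.inl i = z from by rw [hz]; exact congrArg _ (Fin.ext hi)]
      · obtain ⟨jv, hjv⟩ : ∃ jv : ℕ, jv < a + 0 ∧ jv ≠ (i:ℕ) ∧ jv ≠ 0 :=
          ⟨if (i:ℕ) = 1 then 2 else 1, by split_ifs <;> omega⟩
        have h1 : ((Hgraph a 0)ᶜ).Adj (Sum.inl i) (Sum.inr ⟨jv, hjv.1⟩) :=
          (Hcompl_adj i ⟨jv, hjv.1⟩).mpr hjv.2.1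
        have h2 : ((Hgraph a 0)ᶜ).Adj (Sum.inr ⟨jv, hjv.1⟩) z :=
          ((Hcompl_adj ⟨0, h0⟩ ⟨jv, hjv.1⟩).mpr hjv.2.2).symm
        exact h1.reachable.trans h2.reachable
    · by_cases hj : (j:ℕ) = 0
      · have h1 : ((Hgraph a 0)ᶜ).Adj (Sum.inr j) (Sum.inl ⟨1, by omega⟩) :=
          ((Hcompl_adj ⟨1, by omega⟩ j).mpr (by dsimp only; omega)).symm
        have h2 : ((Hgraph a 0)ᶜ).Adj (Sum.inl ⟨1, by omega⟩)
            (Sum.inr ⟨2, by omega⟩) := (Hcompl_adj _ _).mpr (by simp)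
        have h3 : ((Hgraph a 0)ᶜ).Adj (Sum.inr ⟨2, by omega⟩) z :=
          ((Hcompl_adj ⟨0, h0⟩ ⟨2, by omega⟩).mpr (by simp)).symm
        exact (h1.reachable.trans h2.reachable).trans h3.reachable
      · exact (((Hcompl_adj ⟨0, h0⟩ j).mpr (by dsimp only; omega)).symm).reachable
  exact SimpleGraph.connected_iff_exists_forall_reachable _ |>.mpr ⟨z, fun w => (key w).symm⟩

/-- For `a ≥ 3` the complement of `H_0(a)` is connected; consequently the complement of
`J_r(a,t)` has exactly `r − 2t` components of size `a` and `t` of size `2a`, and the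
graphs `J_r(a,t)`, `0 ≤ t ≤ ⌊r/2⌋`, are pairwise non-isomorphic. -/
theorem Jgraph_pairwise_nonisomorphic (a : ℕ) (ha : 3 ≤ a) :
    ((Hgraph a 0)ᶜ).Connected ∧
    ∀ r : ℕ, 2 ≤ r → ∀ t, t ≤ r / 2 →
      (Nat.card {C : (Jgraph r a t)ᶜ.ConnectedComponent // Nat.card C.supp = a}
          = r - 2 * t ∧
       Nat.card {C : (Jgraph r a t)ᶜ.ConnectedComponent // Nat.card C.supp = 2 * a}
          = t) ∧
      ∀ t', t' ≤ r / 2 → t ≠ t' → ¬ Nonempty (Jgraph r a t ≃g Jgraph r a t') := by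
  refine ⟨Hcompl_connected ha, fun r hr t ht => ?_⟩
  have htr : 2*t ≤ r := by omega
  refine ⟨⟨countA ha htr, count2A ha htr⟩, fun t' ht' hne hiso => ?_⟩
  obtain ⟨φ⟩ := hiso
  have htr' : 2*t' ≤ r := by omega
  have hcard := card_comp_iso (isoCompl φ) (2*a)
  rw [count2A ha htr, count2A ha htr'] at hcard
  exact hne hcard
end
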